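/- arXiv:1010.2118 — 8 statements merged into one kernel-verified Lean document; each statement's English description precedes it below -/
import Mathlib

section
/- Let a_1,...,a_m be vectors in Z^n such that the origin lies in the interior of their convex hull in R^n. Then there exists a relation l = (l_1,...,l_m) in Z^m with all l_i > 0 and sum_i l_i * a_i = 0. -/
open Matrix Finset

/-- Factorization of linear maps over a field: if `ker f ≤ ker g` then `g` factors through `f`. -/
lemma aux_factor {K V W U : Type*} [Field K] [AddCommGroup V] [Module K V]
    [AddCommGroup W] [Module K W] [AddCommGroup U] [Module K U]
    (f : V →ₗ[K] W) (g : V →ₗ[K] U) (h : LinearMap.ker f ≤ LinearMap.ker g) :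
    ∃ B : W →ₗ[K] U, B ∘ₗ f = g := by
  let g' : (V ⧸ LinearMap.ker f) →ₗ[K] U := (LinearMap.ker f).liftQ g h
  let h₀ : LinearMap.range f →ₗ[K] U := g' ∘ₗ f.quotKerEquivRange.symm.toLinearMap
  obtain ⟨B, hB⟩ := h₀.exists_extend
  refine ⟨B, ?_⟩
  ext x
  have h1 : B (f x) = h₀ ⟨f x, LinearMap.mem_range_self f x⟩ := by
    have := congrArg (fun (φ : _ →ₗ[K] U) => φ ⟨f x, LinearMap.mem_range_self f x⟩) hB
    simpa using this
  have h2 : f.quotKerEquivRange.symm ⟨f x, LinearMap.mem_range_self f x⟩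
      = (LinearMap.ker f).mkQ x := f.quotKerEquivRange_symm_apply_image x _
  simp only [LinearMap.comp_apply, h1, h₀, LinearEquiv.coe_coe, h2]
  simp [g', Submodule.mkQ_apply]

/-- If the origin lies in the interior of the convex hull of the lattice vectors
`a 1, ..., a m` in `ℝ^n`, then there is a strictly positive integral relation among them. -/
theorem stmt0 (n m : ℕ) (a : Fin m → Fin n → ℤ)
    (h0 : (0 : Fin n → ℝ) ∈
      interior (convexHull ℝ (Set.range fun i => fun k => ((a i k : ℝ))))) :
    ∃ l : Fin m → ℤ, (∀ i, 0 < l i) ∧ ∑ i, l i • a i = 0 := by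
  classical
  set v : Fin m → Fin n → ℝ := fun i k => (a i k : ℝ) with hv
  -- Step 1: a strictly positive real solution t
  obtain ⟨ε, hε, hball⟩ := Metric.mem_nhds_iff.mp (mem_interior_iff_mem_nhds.mp h0)
  set s0 : Fin n → ℝ := ∑ i, v i with hs0
  set δ : ℝ := ε / (2 * (‖s0‖ + 1)) with hδdef
  have hden : (0:ℝ) < 2 * (‖s0‖ + 1) := by positivity
  have hδ : 0 < δ := div_pos hε hden
  have hy : (-δ) • s0 ∈ convexHull ℝ (Set.range v) := by
    apply hball
    simp only [Metric.mem_ball, dist_zero_right, norm_smul]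
    have h1 : ‖(-δ)‖ = δ := by rw [norm_neg, Real.norm_of_nonneg hδ.le]
    rw [h1]
    have h2 : δ * ‖s0‖ < δ * (2 * (‖s0‖ + 1)) := by
      apply mul_lt_mul_of_pos_left _ hδ
      nlinarith [norm_nonneg s0]
    have h3 : δ * (2 * (‖s0‖ + 1)) = ε := by
      rw [hδdef]; exact div_mul_cancel₀ ε hden.ne'
    linarith
  rw [convexHull_range_eq_exists_affineCombination] at hy
  obtain ⟨s, w, hw0, hw1, haff⟩ := hy
  rw [affineCombination_eq_linear_combination s v w hw1] at haff
  set c : Fin m → ℝ := fun i => if i ∈ s then w i else 0 with hc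
  have hcsum : ∑ i, c i • v i = (-δ) • s0 := by
    rw [← haff, ← Finset.sum_subset (Finset.subset_univ s)]
    · exact Finset.sum_congr rfl fun i hi => by simp [hc, hi]
    · intro i _ hi; simp [hc, hi]
  set t : Fin m → ℝ := fun i => c i + δ with htdef
  have ht : ∀ i, 0 < t i := fun i => by
    have h1 : 0 ≤ c i := by
      simp only [hc]; split
      · exact hw0 i ‹_›
      · exact le_refl 0
    simp only [htdef]; linarith
  have htsum : ∑ i, t i • v i = 0 := by
    simp only [htdef, add_smul, Finset.sum_add_distrib, hcsum, ← Finset.smul_sum, ← hs0]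
    simp [neg_smul]
  -- Step 2: matrix setup
  set A : Matrix (Fin n) (Fin m) ℚ := Matrix.of fun k i => ((a i k : ℚ)) with hA
  set A' : Matrix (Fin n) (Fin m) ℝ := A.map ((↑) : ℚ → ℝ) with hA'
  have hA't : A'.mulVec t = 0 := by
    funext k
    have h1 := congrFun htsum k
    simp only [Finset.sum_apply, Pi.smul_apply, smul_eq_mul, Pi.zero_apply] at h1
    simp only [Matrix.mulVec, dotProduct, Pi.zero_apply]
    rw [← h1]
    refine Finset.sum_congr rfl fun i _ => ?_
    simp [hA', hA, hv, mul_comm]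
  set K : Submodule ℚ (Fin m → ℚ) := LinearMap.ker A.mulVecLin with hK
  obtain ⟨K', hK'⟩ := K.exists_isCompl
  set P₀ : (Fin m → ℚ) →ₗ[ℚ] (Fin m → ℚ) :=
    K.subtype ∘ₗ (K.projectionOnto K' hK') with hP₀
  have hP₀mem : ∀ x, P₀ x ∈ K := fun x => (K.projectionOnto K' hK' x).2
  have hP₀id : ∀ x ∈ K, P₀ x = x := by
    intro x hx
    have := Submodule.linearProjOfIsCompl_apply_left hK' ⟨x, hx⟩
    simp only [hP₀, LinearMap.comp_apply]
    rw [show x = ((⟨x, hx⟩ : K) : Fin m → ℚ) from rfl, this]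
    rfl
  set Q₀ : (Fin m → ℚ) →ₗ[ℚ] (Fin m → ℚ) := LinearMap.id - P₀ with hQ₀
  have hkerle : LinearMap.ker A.mulVecLin ≤ LinearMap.ker Q₀ := by
    intro x hx
    simp only [LinearMap.mem_ker, hQ₀, LinearMap.sub_apply, LinearMap.id_apply]
    rw [hP₀id x hx, sub_self]
  obtain ⟨B₀, hB₀⟩ := aux_factor A.mulVecLin Q₀ hkerle
  set P : Matrix (Fin m) (Fin m) ℚ := LinearMap.toMatrix' P₀ with hPdef
  set B : Matrix (Fin m) (Fin n) ℚ := LinearMap.toMatrix' B₀ with hBdef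
  have hBA : B * A = 1 - P := by
    have h1 : LinearMap.toMatrix' (B₀ ∘ₗ A.mulVecLin) = B * A := by
      rw [LinearMap.toMatrix'_comp]
      congr 1
      rw [← Matrix.toLin'_apply']
      exact LinearMap.toMatrix'_toLin' A
    rw [hB₀] at h1
    rw [← h1, hQ₀]
    simp [LinearMap.toMatrix'_id, hPdef]
  set P' : Matrix (Fin m) (Fin m) ℝ := P.map ((↑) : ℚ → ℝ) with hP'def
  set B' : Matrix (Fin m) (Fin n) ℝ := B.map ((↑) : ℚ → ℝ) with hB'def
  have hBA' : B' * A' = 1 - P' := by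
    have h := congrArg (fun M : Matrix (Fin m) (Fin m) ℚ =>
      M.map ((Rat.castHom ℝ : ℚ →+* ℝ) : ℚ → ℝ)) hBA
    rw [Matrix.map_mul, Matrix.map_sub _ (fun x y => map_sub (Rat.castHom ℝ) x y),
      Matrix.map_one _ (map_zero _) (map_one _)] at h
    exact h
  have htP : P'.mulVec t = t := by
    have h1 : (1 - P').mulVec t = 0 := by
      rw [← hBA', ← Matrix.mulVec_mulVec, hA't, Matrix.mulVec_zero]
    rw [Matrix.sub_mulVec, Matrix.one_mulVec, sub_eq_zero] at h1
    exact h1.symm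
  -- Step 3: rational approximation
  have hcont : Continuous fun x : Fin m → ℝ => P'.mulVec x := by
    apply continuous_pi
    intro k
    simp only [Matrix.mulVec, dotProduct]
    exact continuous_finset_sum _ fun i _ => (continuous_const.mul (continuous_apply i))
  set U : Set (Fin m → ℝ) := {x | ∀ i, 0 < P'.mulVec x i} with hU
  have hUopen : IsOpen U := by
    have : U = ⋂ i, (fun x => P'.mulVec x i) ⁻¹' Set.Ioi 0 := by
      ext x; simp [hU]
    rw [this]
    exact isOpen_iInter_of_finite fun i =>
      (isOpen_Ioi).preimage ((continuous_apply i).comp hcont)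
  have htU : t ∈ U := by
    intro i; rw [htP]; exact ht i
  obtain ⟨ε', hε', hball'⟩ := Metric.isOpen_iff.mp hUopen t htU
  have hrat : ∃ r : Fin m → ℚ, ∀ i, |((r i : ℝ)) - t i| < ε' := by
    have : ∀ i, ∃ q : ℚ, t i - ε' < (q:ℝ) ∧ (q:ℝ) < t i + ε' := by
      intro i
      obtain ⟨q, hq1, hq2⟩ := exists_rat_btwn (show t i - ε' < t i + ε' by linarith)
      exact ⟨q, hq1, hq2⟩
    choose r hr using this
    exact ⟨r, fun i => abs_sub_lt_iff.mpr ⟨by linarith [(hr i).2], by linarith [(hr i).1]⟩⟩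
  obtain ⟨r, hr⟩ := hrat
  have hrball : (fun i => (r i : ℝ)) ∈ Metric.ball t ε' := by
    rw [Metric.mem_ball, dist_pi_lt_iff hε']
    intro i
    rw [Real.dist_eq]
    exact hr i
  have hrU : (fun i => (r i : ℝ)) ∈ U := hball' hrball
  set q : Fin m → ℚ := P.mulVec r with hq
  have hcastq : P'.mulVec (fun i => (r i : ℝ)) = fun k => ((q k : ℝ)) := by
    funext k
    simp only [Matrix.mulVec, dotProduct, hq, hP'def, Matrix.map_apply]
    push_cast
    rfl
  have hqpos : ∀ i, 0 < q i := by
    intro i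
    have h2 := hrU i
    rw [hcastq] at h2
    have h3 : (0:ℝ) < ((q i : ℝ)) := by simpa using h2
    exact_mod_cast h3
  have hqker : A.mulVec q = 0 := by
    have h1 : q = P₀ r := by
      rw [hq, hPdef, ← Matrix.toLin'_apply, Matrix.toLin'_toMatrix']
    have h2 : P₀ r ∈ K := hP₀mem r
    rw [hK, LinearMap.mem_ker, Matrix.mulVecLin_apply] at h2
    rw [h1]; exact h2
  -- Step 4: clear denominators
  set e : Fin m → ℤ := fun i => ∏ j ∈ Finset.univ.erase i, ((q j).den : ℤ) with he
  set l : Fin m → ℤ := fun i => (q i).num * e i with hl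
  have hepos : ∀ i, 0 < e i := fun i =>
    Finset.prod_pos fun j _ => Int.natCast_pos.mpr (q j).pos
  have hlpos : ∀ i, 0 < l i := fun i =>
    mul_pos (Rat.num_pos.mpr (hqpos i)) (hepos i)
  set d : ℤ := ∏ j, ((q j).den : ℤ) with hd
  have hkey : ∀ i, (l i : ℚ) = q i * d := by
    intro i
    have h1 : d = ((q i).den : ℤ) * e i := by
      rw [hd, he, ← Finset.mul_prod_erase _ _ (Finset.mem_univ i)]
    have h2 : (q i) * ((q i).den : ℚ) = ((q i).num : ℚ) := by
      have hden0 : ((q i).den : ℚ) ≠ 0 := Nat.cast_ne_zero.mpr (q i).den_nz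
      exact ((div_eq_iff hden0).mp (Rat.num_div_den (q i))).symm
    rw [hl]
    push_cast
    rw [h1]
    push_cast
    rw [← mul_assoc, h2]
  refine ⟨l, hlpos, ?_⟩
  funext k
  have h0' := congrFun hqker k
  simp only [Matrix.mulVec, dotProduct, Pi.zero_apply, hA, Matrix.of_apply] at h0'
  have : ((∑ i, l i • a i) k : ℚ) = 0 := by
    simp only [Finset.sum_apply, Pi.smul_apply, smul_eq_mul]
    push_cast
    have : ∀ i ∈ Finset.univ, ((l i : ℚ)) * ((a i k : ℚ)) = d * (((a i k : ℚ)) * q i) := by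
      intro i _
      rw [hkey i]; ring
    rw [Finset.sum_congr rfl this, ← Finset.mul_sum]
    rw [show (∑ i, ((a i k : ℚ)) * q i) = 0 from h0']
    ring
  have h2 : (((∑ i, l i • a i) k : ℤ) : ℚ) = ((0 : ℤ) : ℚ) := by
    push_cast at this ⊢
    simpa using this
  exact_mod_cast h2
end

section
/- Let a_1,...,a_m in Z^n and suppose there exists l in Z^m with all l_i > 0 and sum_i l_i a_i = 0. Then the monomial map k : (C*)^n -> C^m given by k(y) = (y^{a_1},...,y^{a_m}) (where y^{a_i} = prod_k y_k^{a_{ki}}) is a closed embedding, i.e., the closure of the image of k in C^m is contained in (C*)^m. -/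
/-- If there is a strictly positive integral relation among `a 1, ..., a m`, then the
monomial map `k : (ℂ*)^n → ℂ^m`, `y ↦ (y^{a_1}, ..., y^{a_m})` is a closed embedding:
the closure of its image is contained in `(ℂ*)^m`. -/
theorem stmt1 (n m : ℕ) (a : Fin m → Fin n → ℤ) (l : Fin m → ℤ)
    (hl : ∀ i, 0 < l i) (hrel : ∑ i, l i • a i = 0) :
    closure (Set.range fun y : Fin n → ℂˣ =>
        fun i : Fin m => ((∏ k, (y k) ^ (a i k) : ℂˣ) : ℂ))
      ⊆ {w : Fin m → ℂ | ∀ i, w i ≠ 0} := by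
  -- the continuous function w ↦ ∏ w_j ^ l_j equals 1 on the image, hence on the closure
  have hsub : closure (Set.range fun y : Fin n → ℂˣ =>
        fun i : Fin m => ((∏ k, (y k) ^ (a i k) : ℂˣ) : ℂ))
      ⊆ {w : Fin m → ℂ | ∏ j, w j ^ (l j).toNat = 1} := by
    apply closure_minimal
    · rintro _ ⟨y, rfl⟩
      have key : (∏ j, (∏ k, (y k) ^ (a j k)) ^ (l j).toNat : ℂˣ) = 1 := by
        have : ∀ j, ((∏ k, (y k) ^ (a j k)) ^ (l j).toNat : ℂˣ)
            = ∏ k, (y k) ^ (l j * a j k) := by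
          intro j
          rw [← zpow_natCast, Int.toNat_of_nonneg (hl j).le, ← Finset.prod_zpow]
          exact Finset.prod_congr rfl fun k _ => by rw [← zpow_mul, mul_comm]
        simp_rw [this]
        rw [Finset.prod_comm]
        have hk : ∀ k : Fin n, ∑ j, l j * a j k = 0 := by
          intro k
          have := congrFun hrel k
          simpa using this
        refine Finset.prod_eq_one fun k _ => ?_
        have hp : ∀ (s : Finset (Fin m)), ∏ j ∈ s, (y k) ^ (l j * a j k)
            = (y k) ^ (∑ j ∈ s, l j * a j k) := by
          intro s
          induction s using Finset.cons_induction with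
          | empty => simp
          | cons b s hb ih => rw [Finset.prod_cons, Finset.sum_cons, zpow_add, ih]
        rw [hp, hk k, zpow_zero]
      simp only [Set.mem_setOf_eq]
      calc (∏ j, ((∏ k, (y k) ^ (a j k) : ℂˣ) : ℂ) ^ (l j).toNat)
          = ((∏ j, (∏ k, (y k) ^ (a j k)) ^ (l j).toNat : ℂˣ) : ℂ) := by
            push_cast; ring
        _ = 1 := by rw [key]; rfl
    · exact isClosed_eq (by continuity) continuous_const
  intro w hw i
  have h1 : ∏ j, w j ^ (l j).toNat = 1 := hsub hw
  intro h0
  have : ∏ j, w j ^ (l j).toNat = 0 := by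
    apply Finset.prod_eq_zero (Finset.mem_univ i)
    rw [h0]
    exact zero_pow (by simpa using (hl i))
  simp [this] at h1
end

section
/- Let Sigma be a complete smooth fan in R^n with primitive ray generators a_1,...,a_m such that P(Sigma) is convex. Set tilde{a}_0 = (1,0) and tilde{a}_i = (1,a_i) in Z^{n+1}, and let C(Atilde) be the cone in R^{n+1} generated by tilde{a}_0,...,tilde{a}_m. Then the semigroup N·Atilde = sum_{i=0}^m N tilde{a}_i is normal, i.e., Z^{n+1} ∩ C(Atilde) = N·Atilde. -/
/-- The extended vectors `ã_0 = (1,0)`, `ã_i = (1, a_i)` in `ℤ^{n+1}`. -/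
def atilde {n m : ℕ} (a : Fin m → Fin n → ℤ) : Option (Fin m) → Fin (n + 1) → ℤ :=
  fun o => Fin.cons 1 (fun j => Option.elim o 0 (fun i => a i j))

/-- For a complete smooth fan with `P(Σ)` convex (weak Fano condition), the semigroup
`ℕ·Ã` generated by the extended vectors is normal: an integer vector lies in the real cone
`C(Ã)` if and only if it is an `ℕ`-combination of the `ã_i`. -/
theorem stmt3 (n m : ℕ) (a : Fin m → Fin n → ℤ)
    (𝒮 : Finset (Finset (Fin m)))
    (hcard : ∀ σ ∈ 𝒮, σ.card = n)
    (hray : ∀ i : Fin m, ∃ σ ∈ 𝒮, i ∈ σ)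
    (hcomplete : ∀ x : Fin n → ℝ, ∃ σ ∈ 𝒮, ∃ c : Fin m → ℝ,
      (∀ i, 0 ≤ c i) ∧ (∀ i, i ∉ σ → c i = 0) ∧
        x = ∑ i, c i • (fun k => ((a i k : ℝ))))
    (hsmooth : ∀ σ ∈ 𝒮,
      LinearIndependent ℤ (fun i : {i // i ∈ σ} => a i.1) ∧
        Submodule.span ℤ (a '' ↑σ) = ⊤)
    (hconv : Convex ℝ (⋃ σ ∈ 𝒮,
      convexHull ℝ (insert (0 : Fin n → ℝ) ((fun i => fun k => ((a i k : ℝ))) '' ↑σ)))) :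
    ∀ x : Fin (n + 1) → ℤ,
      ((fun k => ((x k : ℝ))) ∈
        {y : Fin (n + 1) → ℝ | ∃ c : Option (Fin m) → ℝ, (∀ o, 0 ≤ c o) ∧
          y = ∑ o, c o • (fun k => ((atilde a o k : ℝ)))})
      ↔ ∃ c : Option (Fin m) → ℕ, x = ∑ o, (c o : ℤ) • atilde a o := by
  intro x
  constructor
  · rintro ⟨c, hc, hsum⟩
    -- coordinate equations
    have h0 : ((x 0 : ℤ) : ℝ) = ∑ o, c o := by
      have h := congrFun hsum 0
      simpa [Finset.sum_apply, atilde] using h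
    have hs : ∀ j : Fin n, ((x j.succ : ℤ) : ℝ) = ∑ i, c (some i) * ((a i j : ℤ) : ℝ) := by
      intro j
      have h := congrFun hsum j.succ
      simp only [Finset.sum_apply, Pi.smul_apply, smul_eq_mul] at h
      rw [h, Fintype.sum_option]
      simp [atilde]
    have hx0 : (0:ℝ) ≤ ((x 0 : ℤ) : ℝ) := by
      rw [h0]; exact Finset.sum_nonneg fun o _ => hc o
    rcases eq_or_lt_of_le hx0 with hK0 | hK
    · -- x 0 = 0 : everything vanishes
      have hcall : ∀ o, c o = 0 := by
        have := (Finset.sum_eq_zero_iff_of_nonneg (fun o _ => hc o)).1 (by rw [← h0, ← hK0])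
        intro o; exact this o (Finset.mem_univ o)
      refine ⟨0, ?_⟩
      funext k
      have hk : x k = 0 := by
        refine Fin.cases ?_ ?_ k
        · exact_mod_cast hK0.symm
        · intro j
          have h2 := hs j
          simp only [hcall, zero_mul, Finset.sum_const_zero] at h2
          exact_mod_cast h2
      simp [hk]
    · -- main case: x 0 > 0
      set K : ℝ := ((x 0 : ℤ) : ℝ) with hKdef
      set A : Fin m → Fin n → ℝ := fun i => fun k => ((a i k : ℤ) : ℝ) with hAdef
      set p : Fin n → ℝ := K⁻¹ • (fun j => ((x j.succ : ℤ) : ℝ)) with hpdef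
      -- p lies in the convex hull of 0 and all ray generators
      have hpmem : p ∈ convexHull ℝ (insert (0 : Fin n → ℝ) (Set.range A)) := by
        have hcm : (Finset.univ : Finset (Option (Fin m))).centerMass c
            (fun o => Option.elim o 0 A) = p := by
          rw [Finset.centerMass, ← h0, hpdef]
          congr 1
          funext j
          rw [Finset.sum_apply, Fintype.sum_option]
          simp only [Option.elim, Pi.smul_apply, smul_eq_mul, Pi.zero_apply, mul_zero, zero_add]
          exact (hs j).symm
        rw [← hcm]
        refine Finset.centerMass_mem_convexHull _ (fun o _ => hc o) (by rw [← h0]; exact hK) ?_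
        rintro (_ | i) _
        · exact Set.mem_insert _ _
        · exact Set.mem_insert_iff.2 (Or.inr ⟨i, rfl⟩)
      -- the hull of everything is contained in P(Σ)
      have hSsub : convexHull ℝ (insert (0 : Fin n → ℝ) (Set.range A)) ⊆
          ⋃ σ ∈ 𝒮, convexHull ℝ (insert (0 : Fin n → ℝ) (A '' ↑σ)) := by
        refine convexHull_min ?_ hconv
        rintro y hy
        rcases Set.mem_insert_iff.1 hy with rfl | ⟨i, rfl⟩
        · obtain ⟨σ, hσ, -⟩ := hcomplete 0
          exact Set.mem_biUnion hσ (subset_convexHull ℝ _ (Set.mem_insert _ _))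
        · obtain ⟨σ, hσ, hiσ⟩ := hray i
          exact Set.mem_biUnion hσ (subset_convexHull ℝ _
            (Set.mem_insert_iff.2 (Or.inr ⟨i, hiσ, rfl⟩)))
      obtain ⟨σ, hσ, hpσ⟩ := Set.mem_iUnion₂.1 (hSsub hpmem)
      -- membership in the hull over σ gives bounded nonneg coefficients supported on σ
      have hTsub : convexHull ℝ (insert (0 : Fin n → ℝ) (A '' ↑σ)) ⊆
          {y : Fin n → ℝ | ∃ t : Fin m → ℝ, (∀ i, 0 ≤ t i) ∧ (∀ i, i ∉ σ → t i = 0) ∧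
            (∑ i, t i) ≤ 1 ∧ y = ∑ i, t i • A i} := by
        refine convexHull_min ?_ ?_
        · rintro y hy
          rcases Set.mem_insert_iff.1 hy with rfl | ⟨i, hiσ, rfl⟩
          · exact ⟨0, fun _ => le_rfl, fun _ _ => rfl, by simp, by simp⟩
          · refine ⟨fun i' => if i' = i then 1 else 0, ?_, ?_, ?_, ?_⟩
            · intro i'; dsimp only; split <;> norm_num
            · intro i' hi'; dsimp only; split
              · next h => exact absurd (h ▸ hiσ) hi'
              · rfl
            · simp
            · simp [ite_smul]
        · rintro y1 ⟨t1, ht1, hs1, hb1, rfl⟩ y2 ⟨t2, ht2, hs2, hb2, rfl⟩ α β hα hβ hαβ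
          refine ⟨fun i => α * t1 i + β * t2 i, ?_, ?_, ?_, ?_⟩
          · intro i; have := ht1 i; have := ht2 i; positivity
          · intro i hi; simp [hs1 i hi, hs2 i hi]
          · calc (∑ i, (α * t1 i + β * t2 i))
                = α * ∑ i, t1 i + β * ∑ i, t2 i := by
                  rw [Finset.sum_add_distrib, Finset.mul_sum, Finset.mul_sum]
              _ ≤ α * 1 + β * 1 := by gcongr
              _ = 1 := by linarith
          · rw [Finset.smul_sum, Finset.smul_sum, ← Finset.sum_add_distrib]
            exact Finset.sum_congr rfl fun i _ => by
              rw [smul_smul, smul_smul, ← add_smul]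
      obtain ⟨t, ht0, htsupp, htsum, hpt⟩ := hTsub hpσ
      -- real expansion of x in terms of the rays of σ
      have hx' : ∀ j : Fin n, ((x j.succ : ℤ) : ℝ) = ∑ i, (K * t i) * ((a i j : ℤ) : ℝ) := by
        intro j
        have h1 := congrFun hpt j
        rw [hpdef] at h1
        simp only [Pi.smul_apply, smul_eq_mul, Finset.sum_apply] at h1
        have h2 : ((x j.succ : ℤ) : ℝ) = K * ∑ i, t i * A i j := by
          rw [← h1]; field_simp
        rw [h2, Finset.mul_sum]
        exact Finset.sum_congr rfl fun i _ => by rw [hAdef]; ring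
      -- integer expansion of x using smoothness (span = ⊤)
      obtain ⟨hli, hspan⟩ := hsmooth σ hσ
      have hainj : ∀ i ∈ σ, ∀ i' ∈ σ, a i = a i' → i = i' := by
        intro i hi i' hi' h
        have := hli.injective (a₁ := ⟨i, hi⟩) (a₂ := ⟨i', hi'⟩) h
        exact congrArg Subtype.val this
      obtain ⟨f, hf⟩ : ∃ f : (Fin n → ℤ) → ℤ,
          ∑ v ∈ σ.image a, f v • v = fun j => x j.succ := by
        refine (fun h => ⟨_, (Submodule.mem_span_finset.1 h).choose_spec.2⟩) ?_
        rw [Finset.coe_image, hspan]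
        exact Submodule.mem_top
      have hfσ : ∑ i ∈ σ, f (a i) • a i = fun j => x j.succ := by
        rw [← hf, Finset.sum_image hainj]
      set e : Fin m → ℤ := fun i => if i ∈ σ then f (a i) else 0 with hedef
      have he : ∑ i, e i • a i = fun j => x j.succ := by
        rw [← hfσ]
        rw [← Finset.sum_subset (Finset.subset_univ σ)
          (fun i _ hi => by simp [hedef, hi])]
        exact Finset.sum_congr rfl fun i hi => by simp [hedef, hi]
      -- invertibility of the matrix of rays of σ
      have hspan' : ⊤ ≤ Submodule.span ℤ (Set.range fun i : {i // i ∈ σ} => a i.1) := by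
        have hre : (Set.range fun i : {i // i ∈ σ} => a i.1) = a '' ↑σ := by
          ext v
          constructor
          · rintro ⟨⟨i, hi⟩, rfl⟩; exact ⟨i, hi, rfl⟩
          · rintro ⟨i, hi, rfl⟩; exact ⟨⟨i, hi⟩, rfl⟩
        rw [hre]
        exact hspan.ge
      set b : Module.Basis {i // i ∈ σ} ℤ (Fin n → ℤ) := Module.Basis.mk hli hspan' with hbdef
      set eqv : {i // i ∈ σ} ≃ Fin n := σ.equivFinOfCardEq (hcard σ hσ) with heqvdef
      set b' : Module.Basis (Fin n) ℤ (Fin n → ℤ) := b.reindex eqv with hb'def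
      set M : Matrix (Fin n) (Fin n) ℤ := Matrix.of fun r c2 => a (eqv.symm r) c2 with hMdef
      have hMT : (Pi.basisFun ℤ (Fin n)).toMatrix ⇑b' = M.transpose := by
        ext i j
        rw [Module.Basis.toMatrix_apply, Pi.basisFun_repr, hb'def, Module.Basis.reindex_apply, hbdef,
          Module.Basis.coe_mk]
        rfl
      have hdetM : IsUnit M.det := by
        rw [← Matrix.det_transpose, ← hMT]
        haveI := (Pi.basisFun ℤ (Fin n)).invertibleToMatrix b'
        exact Matrix.isUnit_det_of_invertible _
      set Mr : Matrix (Fin n) (Fin n) ℝ := M.map (Int.castRingHom ℝ) with hMrdef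
      have hdetMr : Mr.det ≠ 0 := by
        have : Mr.det = ((M.det : ℤ) : ℝ) := ((Int.castRingHom ℝ).map_det M).symm
        rw [this]
        exact_mod_cast hdetM.ne_zero
      -- the real and integer coefficients agree
      set w : Fin m → ℝ := fun i => K * t i - ((e i : ℤ) : ℝ) with hwdef
      have hw0 : ∀ i, i ∉ σ → w i = 0 := by
        intro i hi
        simp [hwdef, htsupp i hi, hedef, hi]
      have hwsum : ∀ j : Fin n, ∑ i, w i * ((a i j : ℤ) : ℝ) = 0 := by
        intro j
        have hcast : ((x j.succ : ℤ) : ℝ) = ∑ i, ((e i : ℤ) : ℝ) * ((a i j : ℤ) : ℝ) := by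
          have h3 := congrFun he j
          rw [Finset.sum_apply] at h3
          push_cast [← h3]
          exact Finset.sum_congr rfl fun i _ => by
            simp only [Pi.smul_apply, smul_eq_mul]
            push_cast
            ring
        have h4 := hx' j
        calc (∑ i, w i * ((a i j : ℤ) : ℝ))
            = (∑ i, (K * t i) * ((a i j : ℤ) : ℝ)) -
              ∑ i, ((e i : ℤ) : ℝ) * ((a i j : ℤ) : ℝ) := by
              rw [← Finset.sum_sub_distrib]
              exact Finset.sum_congr rfl fun i _ => by rw [hwdef]; ring
          _ = 0 := by rw [← h4, ← hcast, sub_self]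
      have hvm : Matrix.vecMul (fun r => w (eqv.symm r)) Mr = 0 := by
        funext j
        rw [Matrix.vecMul, dotProduct]
        have step1 : ∑ r : Fin n, w (eqv.symm r) * Mr.transpose j r
            = ∑ i : {i // i ∈ σ}, w i * ((a i.1 j : ℤ) : ℝ) :=
          Equiv.sum_comp eqv.symm (fun i : {i // i ∈ σ} => w i * ((a i.1 j : ℤ) : ℝ))
        have step2 : ∑ i : {i // i ∈ σ}, w i * ((a i.1 j : ℤ) : ℝ)
            = ∑ i ∈ σ, w i * ((a i j : ℤ) : ℝ) :=
          Finset.sum_coe_sort σ (fun i => w i * ((a i j : ℤ) : ℝ))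
        have step3 : ∑ i ∈ σ, w i * ((a i j : ℤ) : ℝ)
            = ∑ i, w i * ((a i j : ℤ) : ℝ) :=
          Finset.sum_subset (Finset.subset_univ σ)
            (fun i _ hi => by rw [hw0 i hi, zero_mul])
        have : ∑ r : Fin n, w (eqv.symm r) * Mr r j = 0 := by
          calc ∑ r : Fin n, w (eqv.symm r) * Mr r j
              = ∑ r : Fin n, w (eqv.symm r) * Mr.transpose j r := rfl
            _ = 0 := by rw [step1, step2, step3, hwsum j]
        simpa using this
      have hweq : ∀ i, w i = 0 := by
        have hw' : (fun r => w (eqv.symm r)) = 0 := by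
          have h1 : Matrix.vecMul (fun r => w (eqv.symm r)) (Mr * Mr⁻¹)
              = fun r => w (eqv.symm r) := by
            rw [Matrix.mul_nonsing_inv _ (isUnit_iff_ne_zero.2 hdetMr), Matrix.vecMul_one]
          rw [← Matrix.vecMul_vecMul, hvm, Matrix.zero_vecMul] at h1
          exact h1.symm
        intro i
        by_cases hi : i ∈ σ
        · have := congrFun hw' (eqv ⟨i, hi⟩)
          simpa using this
        · exact hw0 i hi
      have hKe : ∀ i, K * t i = ((e i : ℤ) : ℝ) := fun i => sub_eq_zero.1 (hweq i)
      -- the integer coefficients are nonnegative and bounded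
      have he0 : ∀ i, 0 ≤ e i := by
        intro i
        have : (0:ℝ) ≤ ((e i : ℤ) : ℝ) := by
          rw [← hKe i]; exact mul_nonneg (le_of_lt hK) (ht0 i)
        exact_mod_cast this
      have hesum : ∑ i, e i ≤ x 0 := by
        have : ((∑ i, e i : ℤ) : ℝ) ≤ ((x 0 : ℤ) : ℝ) := by
          push_cast
          calc (∑ i, ((e i : ℤ) : ℝ)) = ∑ i, K * t i :=
                Finset.sum_congr rfl fun i _ => (hKe i).symm
            _ = K * ∑ i, t i := by rw [Finset.mul_sum]
            _ ≤ K * 1 := by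
                exact mul_le_mul_of_nonneg_left htsum (le_of_lt hK)
            _ = ((x 0 : ℤ) : ℝ) := by rw [mul_one, hKdef]
        exact_mod_cast this
      -- assemble the natural-number coefficients
      refine ⟨fun o => Option.elim o (x 0 - ∑ i, e i).toNat (fun i => (e i).toNat), ?_⟩
      funext k
      rw [Finset.sum_apply]
      refine Fin.cases ?_ ?_ k
      · rw [Fintype.sum_option]
        have h1 : ∀ o : Option (Fin m), atilde a o 0 = 1 := fun o => rfl
        simp only [Option.elim, Pi.smul_apply, h1, smul_eq_mul, mul_one]
        rw [Int.toNat_of_nonneg (sub_nonneg.2 hesum)]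
        have : ∀ i, ((((e i).toNat : ℕ) : ℤ)) = e i := fun i => Int.toNat_of_nonneg (he0 i)
        rw [Finset.sum_congr rfl fun i _ => this i]
        ring
      · intro j
        rw [Fintype.sum_option]
        have hnone : atilde a none j.succ = 0 := by simp [atilde]
        have hsome : ∀ i, atilde a (some i) j.succ = a i j := by intro i; simp [atilde]
        simp only [Option.elim, Pi.smul_apply, hnone, smul_eq_mul, mul_zero, zero_add, hsome]
        have h3 := congrFun he j
        rw [Finset.sum_apply] at h3
        rw [← h3]
        refine Finset.sum_congr rfl fun i _ => ?_
        simp only [Pi.smul_apply, smul_eq_mul]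
        rw [Int.toNat_of_nonneg (he0 i)]
  · rintro ⟨c, rfl⟩
    refine ⟨fun o => (c o : ℝ), fun o => by positivity, ?_⟩
    funext k
    simp only [Finset.sum_apply, Pi.smul_apply, smul_eq_mul, zsmul_eq_mul, Pi.mul_apply]
    push_cast
    rfl
end

section
/- With the notation of the previous statement (Sigma complete smooth fan with P(Sigma) convex), the interior integer points of the cone C(Atilde) satisfy Int(C(Atilde)) ∩ Z^{n+1} = (1,0) + (C(Atilde) ∩ Z^{n+1}); equivalently, the map x ↦ x + (1,0) is a bijection from C(Atilde) ∩ Z^{n+1} onto Int(C(Atilde)) ∩ Z^{n+1}. -/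
lemma memC_iff {n m : ℕ} (a : Fin m → Fin n → ℤ) (x : Fin (n+1) → ℝ) :
    (x ∈ {y : Fin (n + 1) → ℝ | ∃ c : Option (Fin m) → ℝ, (∀ o, 0 ≤ c o) ∧
          y = ∑ o, c o • (fun k => ((atilde a o k : ℝ)))})
    ↔ ∃ c : Fin m → ℝ, (∀ i, 0 ≤ c i) ∧ (∑ i, c i) ≤ x 0 ∧
        ∀ k : Fin n, x k.succ = ∑ i, c i * (a i k : ℝ) := by
  constructor
  · rintro ⟨c, hc, rfl⟩
    have hev : ∀ j, (∑ o, c o • (fun k => ((atilde a o k : ℝ)))) j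
        = ∑ o, c o * ((atilde a o j : ℝ)) := by
      intro j; simp [Finset.sum_apply]
    refine ⟨fun i => c (some i), fun i => hc _, ?_, ?_⟩
    · rw [hev 0]
      simp only [atilde, Fin.cons_zero, Int.cast_one, mul_one, Fintype.sum_option]
      have := hc none; linarith
    · intro k
      rw [hev k.succ]
      simp [atilde, Fintype.sum_option]
  · rintro ⟨c, hc0, hcs, hx⟩
    refine ⟨fun o => o.elim (x 0 - ∑ i, c i) c, ?_, ?_⟩
    · intro o; cases o with
      | none => simpa using sub_nonneg.2 hcs
      | some i => exact hc0 i
    · funext j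
      have hev : ∀ (d : Option (Fin m) → ℝ),
          (∑ o, d o • (fun k => ((atilde a o k : ℝ)))) j = ∑ o, d o * ((atilde a o j : ℝ)) := by
        intro d; simp [Finset.sum_apply]
      rw [hev]
      induction j using Fin.cases with
      | zero => simp [atilde, Fintype.sum_option]
      | succ k => simp [atilde, Fintype.sum_option, hx k]

lemma lemA {n m : ℕ} {a : Fin m → Fin n → ℤ} {𝒮 : Finset (Finset (Fin m))}
    (hray : ∀ i : Fin m, ∃ σ ∈ 𝒮, i ∈ σ)
    (h𝒮 : ∃ σ, σ ∈ 𝒮)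
    (hconv : Convex ℝ (⋃ σ ∈ 𝒮,
      convexHull ℝ (insert (0 : Fin n → ℝ) ((fun i => fun k => ((a i k : ℝ))) '' ↑σ))))
    (v : Fin n → ℝ) (s : ℝ) (hs : 0 < s)
    (d : Fin m → ℝ) (hd : ∀ i, 0 ≤ d i) (hds : ∑ i, d i ≤ s)
    (hv : ∀ k, v k = ∑ i, d i * (a i k : ℝ)) :
    ∃ σ ∈ 𝒮, ∃ c : Fin m → ℝ, (∀ i, 0 ≤ c i) ∧ (∀ i, i ∉ σ → c i = 0) ∧
      ∑ i, c i ≤ s ∧ ∀ k, v k = ∑ i, c i * (a i k : ℝ) := by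
  classical
  set U := ⋃ σ ∈ 𝒮, convexHull ℝ
      (insert (0 : Fin n → ℝ) ((fun i => fun k => ((a i k : ℝ))) '' ↑σ)) with hU
  have h0U : (0 : Fin n → ℝ) ∈ U := by
    obtain ⟨σ, hσ⟩ := h𝒮
    exact Set.mem_biUnion hσ (subset_convexHull ℝ _ (Set.mem_insert _ _))
  have haU : ∀ i : Fin m, (fun k => ((a i k : ℝ))) ∈ U := by
    intro i
    obtain ⟨σ, hσ, hiσ⟩ := hray i
    exact Set.mem_biUnion hσ (subset_convexHull ℝ _
      (Set.mem_insert_of_mem _ ⟨i, hiσ, rfl⟩))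
  have hvs : (fun k => v k / s) ∈ U := by
    have hsum : (fun k => v k / s) = ∑ o : Option (Fin m),
        (Option.elim o (1 - (∑ i, d i) / s) (fun i => d i / s)) •
          (Option.elim o (0 : Fin n → ℝ) (fun i => (fun k => ((a i k : ℝ))))) := by
      funext k
      rw [Finset.sum_apply]
      simp only [Fintype.sum_option, Option.elim, Pi.smul_apply, smul_eq_mul, Pi.zero_apply,
        mul_zero, zero_add]
      rw [hv k, Finset.sum_div]
      exact Finset.sum_congr rfl (fun i _ => by ring)
    rw [hsum]
    refine hconv.sum_mem ?_ ?_ ?_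
    · intro o _
      cases o with
      | none =>
        simp only [Option.elim]
        have : (∑ i, d i) / s ≤ 1 := by
          rw [div_le_one hs]; exact hds
        linarith
      | some i => exact div_nonneg (hd i) hs.le
    · rw [Fintype.sum_option]
      simp only [Option.elim]
      rw [← Finset.sum_div]
      field_simp
      ring
    · intro o _
      cases o with
      | none => exact h0U
      | some i => exact haU i
  obtain ⟨σ, hσ, hmem⟩ := Set.mem_iUnion₂.mp hvs
  set Dσ : Set (Fin n → ℝ) := {x | ∃ c : Fin m → ℝ, (∀ i, 0 ≤ c i) ∧ (∀ i, i ∉ σ → c i = 0) ∧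
      ∑ i, c i ≤ 1 ∧ x = fun k => ∑ i, c i * (a i k : ℝ)} with hDσ
  have hDconv : Convex ℝ Dσ := by
    rintro x ⟨c, hc0, hcsupp, hcsum, rfl⟩ y ⟨c', hc'0, hc'supp, hc'sum, rfl⟩ α β hα hβ hαβ
    refine ⟨fun i => α * c i + β * c' i, ?_, ?_, ?_, ?_⟩
    · intro i; exact add_nonneg (mul_nonneg hα (hc0 i)) (mul_nonneg hβ (hc'0 i))
    · intro i hi; simp [hcsupp i hi, hc'supp i hi]
    · rw [Finset.sum_add_distrib, ← Finset.mul_sum, ← Finset.mul_sum]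
      nlinarith [hcsum, hc'sum]
    · funext k
      simp only [Pi.add_apply, Pi.smul_apply, smul_eq_mul]
      rw [Finset.mul_sum, Finset.mul_sum, ← Finset.sum_add_distrib]
      exact Finset.sum_congr rfl (fun i _ => by ring)
  have hsub : convexHull ℝ
      (insert (0 : Fin n → ℝ) ((fun i => fun k => ((a i k : ℝ))) '' ↑σ)) ⊆ Dσ := by
    refine convexHull_min ?_ hDconv
    rintro x (rfl | ⟨i, hiσ, rfl⟩)
    · exact ⟨0, fun i => le_rfl, fun i _ => rfl, by simp, by funext k; simp⟩
    · refine ⟨Pi.single i 1, ?_, ?_, ?_, ?_⟩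
      · intro j; by_cases h : j = i <;> simp [Pi.single_apply, h]
      · intro j hj
        have : j ≠ i := fun h => hj (h ▸ hiσ)
        simp [Pi.single_apply, this]
      · simp
      · funext k
        rw [Finset.sum_eq_single i]
        · simp
        · intro j _ hj; simp [Pi.single_apply, hj]
        · intro h; exact absurd (Finset.mem_univ i) h
  obtain ⟨c, hc0, hcsupp, hcsum, hcv⟩ := hsub hmem
  refine ⟨σ, hσ, fun i => s * c i, fun i => mul_nonneg hs.le (hc0 i),
    fun i hi => by simp [hcsupp i hi], ?_, ?_⟩
  · rw [← Finset.mul_sum]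
    nlinarith [hcsum]
  · intro k
    have := congrFun hcv k
    have hvk : v k = s * (v k / s) := by field_simp
    rw [hvk, this, Finset.mul_sum]
    exact Finset.sum_congr rfl (fun i _ => by ring)

lemma lemB {n m : ℕ} {a : Fin m → Fin n → ℤ} {σ : Finset (Fin m)}
    (hli : LinearIndependent ℤ (fun i : {i // i ∈ σ} => a i.1))
    (hsp : Submodule.span ℤ (a '' ↑σ) = ⊤)
    (v : Fin n → ℤ) (c : Fin m → ℝ) (hsupp : ∀ i, i ∉ σ → c i = 0)
    (hv : ∀ k, (v k : ℝ) = ∑ i, c i * (a i k : ℝ)) :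
    ∀ i, ∃ z : ℤ, c i = (z : ℝ) := by
  classical
  have hr : Set.range (fun i : {i // i ∈ σ} => a i.1) = a '' ↑σ := by
    ext x; simp
  have hsp' : ⊤ ≤ Submodule.span ℤ (Set.range (fun i : {i // i ∈ σ} => a i.1)) := by
    rw [hr, hsp]
  set b : Module.Basis {i // i ∈ σ} ℤ (Fin n → ℤ) := Module.Basis.mk hli hsp' with hb
  intro i
  by_cases hiσ : i ∈ σ
  · set w : Fin n → ℤ := fun k => b.coord ⟨i, hiσ⟩ (Pi.single k 1) with hw
    have key : ∀ u : Fin n → ℤ, ∑ k, u k * w k = b.coord ⟨i, hiσ⟩ u := by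
      intro u
      conv_rhs => rw [← Finset.univ_sum_single u]
      rw [map_sum]
      refine Finset.sum_congr rfl (fun k _ => ?_)
      have : Pi.single k (u k) = u k • (Pi.single k 1 : Fin n → ℤ) := by
        rw [← Pi.single_smul, smul_eq_mul, mul_one]
      rw [this, map_smul, smul_eq_mul]
    have key2 : ∀ j (hj : j ∈ σ), b.coord ⟨i, hiσ⟩ (a j) = if j = i then 1 else 0 := by
      intro j hj
      have : a j = b ⟨j, hj⟩ := by rw [hb, Module.Basis.mk_apply]
      rw [this, Module.Basis.coord_apply, Module.Basis.repr_self, Finsupp.single_apply]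
      by_cases h : j = i
      · subst h; simp
      · have : (⟨j, hj⟩ : {i // i ∈ σ}) ≠ ⟨i, hiσ⟩ := by simpa using h
        simp [h, Subtype.ext_iff]
    have hreal : ∑ k, (v k : ℝ) * (w k : ℝ) = c i := by
      calc ∑ k, (v k : ℝ) * (w k : ℝ)
          = ∑ k, (∑ j, c j * (a j k : ℝ)) * (w k : ℝ) := by
            refine Finset.sum_congr rfl (fun k _ => by rw [hv k])
        _ = ∑ j, c j * (∑ k, (a j k : ℝ) * (w k : ℝ)) := by
            simp_rw [Finset.sum_mul, Finset.mul_sum]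
            rw [Finset.sum_comm]
            exact Finset.sum_congr rfl (fun j _ => Finset.sum_congr rfl (fun k _ => by ring))
        _ = ∑ j, (if j = i then c j else 0) := by
            refine Finset.sum_congr rfl (fun j _ => ?_)
            by_cases hj : j ∈ σ
            · have : ∑ k, (a j k : ℝ) * (w k : ℝ) = ((∑ k, a j k * w k : ℤ) : ℝ) := by
                push_cast; rfl
              rw [this, key, key2 j hj]
              by_cases h : j = i <;> simp [h]
            · simp [hsupp j hj]
        _ = c i := by simp
    refine ⟨∑ k, v k * w k, ?_⟩
    rw [← hreal]; push_cast; rfl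
  · exact ⟨0, by simp [hsupp i hiσ]⟩

def Lmap {n m : ℕ} (a : Fin m → Fin n → ℤ) : (Fin m → ℝ) →ₗ[ℝ] (Fin n → ℝ) where
  toFun := fun d => fun k => ∑ i, d i * (a i k : ℝ)
  map_add' := by intro d e; funext k; simp [add_mul, Finset.sum_add_distrib]
  map_smul' := by intro r d; funext k; simp [Finset.mul_sum, mul_assoc]

lemma lemSurj {n m : ℕ} {a : Fin m → Fin n → ℤ} {σ : Finset (Fin m)}
    (hli : LinearIndependent ℤ (fun i : {i // i ∈ σ} => a i.1))
    (hsp : Submodule.span ℤ (a '' ↑σ) = ⊤) :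
    Function.Surjective (Lmap a) := by
  classical
  have hr : Set.range (fun i : {i // i ∈ σ} => a i.1) = a '' ↑σ := by ext x; simp
  have hsp' : ⊤ ≤ Submodule.span ℤ (Set.range (fun i : {i // i ∈ σ} => a i.1)) := by
    rw [hr, hsp]
  set b : Module.Basis {i // i ∈ σ} ℤ (Fin n → ℤ) := Module.Basis.mk hli hsp' with hb
  have hZcast : ∀ u : Fin n → ℤ, (fun k => ((u k : ℝ))) ∈ LinearMap.range (Lmap a) := by
    intro u
    refine ⟨fun j => ∑ i : {i // i ∈ σ}, if j = i.1 then ((b.repr u i : ℤ) : ℝ) else 0, ?_⟩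
    funext k
    have hu : u k = ∑ i : {i // i ∈ σ}, (b.repr u i) * a i.1 k := by
      conv_lhs => rw [← Module.Basis.sum_repr b u]
      rw [Finset.sum_apply]
      refine Finset.sum_congr rfl (fun i _ => ?_)
      rw [hb, Module.Basis.mk_apply]
      simp
    show ∑ j, (∑ i : {i // i ∈ σ}, if j = i.1 then ((b.repr u i : ℤ) : ℝ) else 0)
        * (a j k : ℝ) = (u k : ℝ)
    rw [hu]
    push_cast
    simp_rw [Finset.sum_mul, ite_mul, zero_mul]
    rw [Finset.sum_comm]
    simp
  have hsingle : ∀ k0 : Fin n, (Pi.single k0 (1 : ℝ)) ∈ LinearMap.range (Lmap a) := by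
    intro k0
    have hcast : (fun k => ((Pi.single k0 (1 : ℤ) : Fin n → ℤ) k : ℝ))
        = Pi.single k0 (1 : ℝ) := by
      funext k
      simp [Pi.single_apply, apply_ite (Int.cast : ℤ → ℝ)]
    rw [← hcast]
    exact hZcast _
  intro u
  have hmem : u ∈ LinearMap.range (Lmap a) := by
    have hu : u = ∑ k0, u k0 • (Pi.single k0 (1 : ℝ) : Fin n → ℝ) := by
      conv_lhs => rw [← Finset.univ_sum_single u]
      refine Finset.sum_congr rfl (fun k0 _ => ?_)
      rw [← Pi.single_smul, smul_eq_mul, mul_one]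
    rw [hu]
    exact Submodule.sum_mem _ (fun k0 _ => Submodule.smul_mem _ _ (hsingle k0))
  exact hmem

/-- For a complete smooth fan with `P(Σ)` convex, the interior integer points of the cone
`C(Ã)` are exactly `(1,0)` plus the integer points of `C(Ã)`:
`Int(C(Ã)) ∩ ℤ^{n+1} = (1,0) + (C(Ã) ∩ ℤ^{n+1})`. -/
theorem stmt4 (n m : ℕ) (a : Fin m → Fin n → ℤ)
    (𝒮 : Finset (Finset (Fin m)))
    (hcard : ∀ σ ∈ 𝒮, σ.card = n)
    (hray : ∀ i : Fin m, ∃ σ ∈ 𝒮, i ∈ σ)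
    (hcomplete : ∀ x : Fin n → ℝ, ∃ σ ∈ 𝒮, ∃ c : Fin m → ℝ,
      (∀ i, 0 ≤ c i) ∧ (∀ i, i ∉ σ → c i = 0) ∧
        x = ∑ i, c i • (fun k => ((a i k : ℝ))))
    (hsmooth : ∀ σ ∈ 𝒮,
      LinearIndependent ℤ (fun i : {i // i ∈ σ} => a i.1) ∧
        Submodule.span ℤ (a '' ↑σ) = ⊤)
    (hconv : Convex ℝ (⋃ σ ∈ 𝒮,
      convexHull ℝ (insert (0 : Fin n → ℝ) ((fun i => fun k => ((a i k : ℝ))) '' ↑σ)))) :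
    ∀ x : Fin (n + 1) → ℤ,
      ((fun k => ((x k : ℝ))) ∈ interior
        {y : Fin (n + 1) → ℝ | ∃ c : Option (Fin m) → ℝ, (∀ o, 0 ≤ c o) ∧
          y = ∑ o, c o • (fun k => ((atilde a o k : ℝ)))})
      ↔ ∃ y : Fin (n + 1) → ℤ,
          ((fun k => ((y k : ℝ))) ∈
            {y' : Fin (n + 1) → ℝ | ∃ c : Option (Fin m) → ℝ, (∀ o, 0 ≤ c o) ∧
              y' = ∑ o, c o • (fun k => ((atilde a o k : ℝ)))})
          ∧ x = Fin.cons 1 0 + y := by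
  classical
  intro x
  constructor
  · -- forward: interior point ⇒ shift by (1,0)
    intro h
    obtain ⟨ε, hε, hball⟩ := Metric.mem_nhds_iff.mp (mem_interior_iff_mem_nhds.mp h)
    set ε' : ℝ := min (ε/2) (1/2) with hε'def
    have hε'pos : 0 < ε' := lt_min (by linarith) (by norm_num)
    have hε'lt : ε' < ε := lt_of_le_of_lt (min_le_left _ _) (by linarith)
    have hε'half : ε' ≤ 1/2 := min_le_right _ _
    set x' : Fin (n+1) → ℝ :=
      Function.update (fun k => ((x k : ℝ))) 0 ((x 0 : ℝ) - ε') with hx'def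
    have hx'ball : x' ∈ Metric.ball (fun k => ((x k : ℝ))) ε := by
      rw [Metric.mem_ball, dist_pi_lt_iff hε]
      intro j
      by_cases hj : j = 0
      · subst hj
        rw [hx'def, Function.update_self]
        rw [Real.dist_eq]
        rw [show (x 0 : ℝ) - ε' - (x 0 : ℝ) = -ε' by ring]
        rw [abs_neg, abs_of_pos hε'pos]
        exact hε'lt
      · rw [hx'def, Function.update_of_ne hj]
        simpa using hε
    have hx'S := hball hx'ball
    obtain ⟨d, hd0, hds, hdv⟩ := (memC_iff a x').mp hx'S
    have hx'0 : x' 0 = (x 0 : ℝ) - ε' := by rw [hx'def, Function.update_self]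
    have hx'succ : ∀ k : Fin n, x' k.succ = ((x k.succ : ℝ)) := fun k => by
      rw [hx'def, Function.update_of_ne (Fin.succ_ne_zero k)]
    have hdsum0 : 0 ≤ ∑ i, d i := Finset.sum_nonneg fun i _ => hd0 i
    have ht1 : 1 ≤ x 0 := by
      have hx0pos : (0:ℝ) < (x 0 : ℝ) := by
        rw [hx'0] at hds; linarith
      have : (0:ℤ) < x 0 := by exact_mod_cast hx0pos
      omega
    have ht1R : (1:ℝ) ≤ ((x 0 : ℤ) : ℝ) := by exact_mod_cast ht1
    set s : ℝ := (x 0 : ℝ) - ε' with hsdef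
    have hs : 0 < s := by rw [hsdef]; linarith
    obtain ⟨σe, hσe, _⟩ := hcomplete 0
    obtain ⟨σ, hσ, c, hc0, hcsupp, hcsum, hcv⟩ :=
      lemA hray ⟨σe, hσe⟩ hconv (fun k => ((x k.succ : ℝ))) s hs d hd0
        (le_of_le_of_eq hds hx'0)
        (fun k => (hx'succ k).symm.trans (hdv k))
    obtain ⟨hli, hsp⟩ := hsmooth σ hσ
    have hzex := lemB hli hsp (fun k => x k.succ) c hcsupp (fun k => hcv k)
    choose z hz using hzex
    have hzsum : ((∑ i, z i : ℤ) : ℝ) = ∑ i, c i := by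
      push_cast
      exact Finset.sum_congr rfl fun i _ => (hz i).symm
    have hsumle : ∑ i, z i ≤ x 0 - 1 := by
      have h1 : ((∑ i, z i : ℤ) : ℝ) < ((x 0 : ℤ) : ℝ) := by
        rw [hzsum]
        calc ∑ i, c i ≤ s := hcsum
          _ < (x 0 : ℝ) := by rw [hsdef]; linarith
      have : (∑ i, z i) < x 0 := by exact_mod_cast h1
      omega
    refine ⟨fun j => x j - (Fin.cons 1 0 : Fin (n+1) → ℤ) j, ?_, ?_⟩
    · apply (memC_iff a _).mpr
      refine ⟨c, hc0, ?_, ?_⟩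
      · show ∑ i, c i ≤ ((x 0 - (Fin.cons 1 0 : Fin (n+1) → ℤ) 0 : ℤ) : ℝ)
        rw [← hzsum]
        have : x 0 - (Fin.cons 1 0 : Fin (n+1) → ℤ) 0 = x 0 - 1 := by
          rw [Fin.cons_zero]
        rw [this]
        exact_mod_cast hsumle
      · intro k
        show ((x k.succ - (Fin.cons 1 0 : Fin (n+1) → ℤ) k.succ : ℤ) : ℝ) = _
        have : x k.succ - (Fin.cons 1 0 : Fin (n+1) → ℤ) k.succ = x k.succ := by
          rw [Fin.cons_succ]; simp
        rw [this]
        exact hcv k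
    · funext j
      simp
  · -- backward: shift by (1,0) ⇒ interior point
    rintro ⟨y, hyS, hxy⟩
    obtain ⟨c, hc0, hcs, hcv⟩ := (memC_iff a _).mp hyS
    have hcs' : ∑ i, c i ≤ ((y 0 : ℤ) : ℝ) := hcs
    have hcv' : ∀ k : Fin n, ((y k.succ : ℤ) : ℝ) = ∑ i, c i * (a i k : ℝ) := hcv
    obtain ⟨σ0, hσ0, _⟩ := hcomplete 0
    obtain ⟨hli0, hsp0⟩ := hsmooth σ0 hσ0
    have hsurjL : Function.Surjective (Lmap a) := lemSurj hli0 hsp0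
    set Lc : (Fin m → ℝ) →L[ℝ] (Fin n → ℝ) :=
      LinearMap.toContinuousLinearMap (Lmap a) with hLcdef
    have hLcoe : ⇑Lc = ⇑(Lmap a) := LinearMap.coe_toContinuousLinearMap' (Lmap a)
    have hsurj : Function.Surjective ⇑Lc := by rw [hLcoe]; exact hsurjL
    -- positive circuit r
    obtain ⟨σr, hσr, q, hq0, hqsupp, hqx⟩ := hcomplete (fun k => -∑ i, (a i k : ℝ))
    set r : Fin m → ℝ := fun i => 1 + q i with hrdef
    have hr1 : ∀ i, 1 ≤ r i := fun i => by
      rw [hrdef]; have := hq0 i; simp; linarith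
    have hr0 : ∀ k, ∑ i, r i * (a i k : ℝ) = 0 := by
      intro k
      have h1 := congrFun hqx k
      rw [Finset.sum_apply] at h1
      simp only [Pi.smul_apply, smul_eq_mul] at h1
      have : ∑ i, r i * (a i k : ℝ)
          = ∑ i, (a i k : ℝ) + ∑ i, q i * (a i k : ℝ) := by
        rw [← Finset.sum_add_distrib]
        refine Finset.sum_congr rfl (fun i _ => ?_)
        rw [hrdef]; ring
      rw [this, ← h1]
      ring
    set R : ℝ := ∑ i, r i with hRdef
    have hR0 : 0 ≤ R := by
      rw [hRdef]
      exact Finset.sum_nonneg fun i _ => le_trans zero_le_one (hr1 i)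
    have hmR : (0:ℝ) < 2 * ((m : ℝ) + R) + 2 := by
      have : (0:ℝ) ≤ (m : ℝ) := Nat.cast_nonneg m
      linarith
    set δ : ℝ := 1 / (2 * ((m : ℝ) + R) + 2) with hδdef
    have hδpos : 0 < δ := by rw [hδdef]; positivity
    have hδbound : δ * ((m : ℝ) + R) ≤ 1/2 := by
      rw [hδdef, div_mul_eq_mul_div, one_mul, div_le_iff₀ hmR]
      have : (0:ℝ) ≤ (m : ℝ) := Nat.cast_nonneg m
      linarith
    set s : ℝ := ((y 0 : ℤ) : ℝ) with hsdef
    set U : Set (Fin (n+1) → ℝ) :=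
      ((fun z : Fin (n+1) → ℝ => z 0) ⁻¹' (Set.Ioi (s + 1/2))) ∩
      ((fun z : Fin (n+1) → ℝ => (fun k => z k.succ - ((y k.succ : ℤ) : ℝ))) ⁻¹'
        (⇑Lc '' Metric.ball 0 δ)) with hUdef
    clear_value Lc r R δ s U
    have hUopen : IsOpen U := by
      rw [hUdef]
      refine IsOpen.inter ?_ ?_
      · exact isOpen_Ioi.preimage (continuous_apply 0)
      · refine IsOpen.preimage ?_ ((Lc.isOpenMap hsurj) _ Metric.isOpen_ball)
        exact continuous_pi fun k => (continuous_apply k.succ).sub continuous_const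
    have hx0 : x 0 = 1 + y 0 := by
      have := congrFun hxy 0
      simpa [Fin.cons_zero] using this
    have hxsucc : ∀ k : Fin n, x k.succ = y k.succ := by
      intro k
      have := congrFun hxy k.succ
      simpa [Fin.cons_succ] using this
    have hxU : (fun k => ((x k : ℝ))) ∈ U := by
      rw [hUdef]
      constructor
      · show ((x 0 : ℤ) : ℝ) ∈ Set.Ioi (s + 1/2)
        rw [Set.mem_Ioi, hsdef, hx0]
        push_cast
        linarith
      · show (fun k => ((x k.succ : ℤ) : ℝ) - ((y k.succ : ℤ) : ℝ)) ∈ ⇑Lc '' Metric.ball 0 δ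
        refine ⟨0, Metric.mem_ball_self hδpos, ?_⟩
        rw [map_zero]
        funext k
        rw [hxsucc k]
        simp
    have hUsub : U ⊆ {y : Fin (n + 1) → ℝ | ∃ c : Option (Fin m) → ℝ, (∀ o, 0 ≤ c o) ∧
          y = ∑ o, c o • (fun k => ((atilde a o k : ℝ)))} := by
      intro w hw
      rw [hUdef] at hw
      obtain ⟨hw0, d, hdball, hdw⟩ := hw
      have habs : ∀ i, |d i| < δ := by
        intro i
        have h1 : dist d 0 < δ := Metric.mem_ball.mp hdball
        calc |d i| = ‖d i‖ := (Real.norm_eq_abs _).symm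
          _ ≤ ‖d‖ := norm_le_pi_norm d i
          _ = dist d 0 := (dist_zero_right d).symm
          _ < δ := h1
      apply (memC_iff a w).mpr
      refine ⟨fun i => c i + d i + δ * r i, ?_, ?_, ?_⟩
      · intro i
        show 0 ≤ c i + d i + δ * r i
        have h1 := abs_lt.mp (habs i)
        have h2 : δ ≤ δ * r i := by nlinarith [hr1 i, hδpos.le]
        have := hc0 i
        linarith [h1.1]
      · show ∑ i, (c i + d i + δ * r i) ≤ w 0
        have hsd : ∑ i, d i ≤ (m : ℝ) * δ := by
          calc ∑ i, d i ≤ ∑ _i : Fin m, δ :=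
                Finset.sum_le_sum (fun i _ =>
                  le_of_lt (lt_of_le_of_lt (le_abs_self _) (habs i)))
            _ = (m : ℝ) * δ := by
                rw [Finset.sum_const, Finset.card_univ, Fintype.card_fin, nsmul_eq_mul]
        have hsplit : ∑ i, (c i + d i + δ * r i)
            = (∑ i, c i) + (∑ i, d i) + δ * R := by
          rw [hRdef, Finset.mul_sum, ← Finset.sum_add_distrib, ← Finset.sum_add_distrib]
        rw [hsplit]
        have hw0' : s + 1/2 < w 0 := hw0
        nlinarith [hδbound, hcs', hδpos.le]
      · intro k
        show w k.succ = ∑ i, (c i + d i + δ * r i) * (a i k : ℝ)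
        have hLd := congrFun hdw k
        have hLdk : Lc d k = ∑ i, d i * (a i k : ℝ) := by rw [hLcoe]; rfl
        have hwk : w k.succ = ((y k.succ : ℤ) : ℝ) + ∑ i, d i * (a i k : ℝ) := by
          have : w k.succ - ((y k.succ : ℤ) : ℝ) = ∑ i, d i * (a i k : ℝ) := by
            rw [← hLdk]; exact hLd.symm
          linarith [this]
        rw [hwk, hcv' k]
        have : ∑ i, (c i + d i + δ * r i) * (a i k : ℝ)
            = (∑ i, c i * (a i k : ℝ)) + (∑ i, d i * (a i k : ℝ))
              + δ * ∑ i, r i * (a i k : ℝ) := by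
          rw [Finset.mul_sum, ← Finset.sum_add_distrib, ← Finset.sum_add_distrib]
          exact Finset.sum_congr rfl (fun i _ => by ring)
        rw [this, hr0 k]
        ring
    exact mem_interior.mpr ⟨U, hUsub, hUopen, hxU⟩
end

section
/- Let X be the toric variety of a complete smooth fan Sigma in R^n with primitive ray generators a_1,...,a_m. Then the C-algebra C[v_1,...,v_m]/( (sum_i a_{ki} v_i)_{k=1..n} + (v_{i_1}···v_{i_p} : {a_{i_1},...,a_{i_p}} a primitive collection) ) is a finite-dimensional local C-algebra supported at the origin; in particular its reduced spectrum is the single point 0 in C^m. -/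
/-- The Stanley–Reisner presentation of the cohomology ring of the toric variety of the
fan with ray generators `a` and maximal cones `𝒮`: the ideal generated by the linear
relations `∑_i a_{ki} v_i` and the monomials `∏_{i ∈ τ} v_i` over all primitive
collections `τ`. -/
noncomputable def srIdeal (n m : ℕ) (a : Fin m → Fin n → ℤ)
    (𝒮 : Finset (Finset (Fin m))) : Ideal (MvPolynomial (Fin m) ℂ) :=
  Ideal.span
    ({p : MvPolynomial (Fin m) ℂ | ∃ k : Fin n,
        p = ∑ i, MvPolynomial.C ((a i k : ℂ)) * MvPolynomial.X i} ∪
     {p : MvPolynomial (Fin m) ℂ | ∃ τ : Finset (Fin m),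
        (¬ ∃ σ ∈ 𝒮, τ ⊆ σ) ∧ (∀ τ' ⊂ τ, ∃ σ ∈ 𝒮, τ' ⊆ σ) ∧
        p = ∏ i ∈ τ, MvPolynomial.X i})

open MvPolynomial in
/-- Every polynomial with its constant term removed lies in the ideal generated by the
variables. -/
lemma sub_C_constantCoeff_mem_span_X {m : ℕ} (p : MvPolynomial (Fin m) ℂ) :
    p - C (constantCoeff p) ∈
      Ideal.span (Set.range (X : Fin m → MvPolynomial (Fin m) ℂ)) := by
  induction p using MvPolynomial.induction_on with
  | C a => simp
  | add p q hp hq =>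
    have : p + q - C (constantCoeff (p + q)) =
        (p - C (constantCoeff p)) + (q - C (constantCoeff q)) := by
      rw [map_add, map_add]; ring
    rw [this]
    exact Ideal.add_mem _ hp hq
  | mul_X p i _ =>
    have : p * X i - C (constantCoeff (p * X i)) = p * X i := by simp
    rw [this]
    exact Ideal.mul_mem_left _ _ (Ideal.subset_span ⟨i, rfl⟩)

open MvPolynomial in
/-- For a complete smooth fan, the Stanley–Reisner algebra
`ℂ[v_1,...,v_m]/(linear relations + primitive collection monomials)` is a finite
dimensional local `ℂ`-algebra whose only common zero is the origin; in particular its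
reduced spectrum is the single point `0 ∈ ℂ^m`. -/
theorem stmt8 (n m : ℕ) (a : Fin m → Fin n → ℤ)
    (𝒮 : Finset (Finset (Fin m)))
    (hcard : ∀ σ ∈ 𝒮, σ.card = n)
    (hray : ∀ i : Fin m, ∃ σ ∈ 𝒮, i ∈ σ)
    (hcomplete : ∀ x : Fin n → ℝ, ∃ σ ∈ 𝒮, ∃ c : Fin m → ℝ,
      (∀ i, 0 ≤ c i) ∧ (∀ i, i ∉ σ → c i = 0) ∧
        x = ∑ i, c i • (fun k => ((a i k : ℝ))))
    (hsmooth : ∀ σ ∈ 𝒮,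
      LinearIndependent ℤ (fun i : {i // i ∈ σ} => a i.1) ∧
        Submodule.span ℤ (a '' ↑σ) = ⊤) :
    FiniteDimensional ℂ (MvPolynomial (Fin m) ℂ ⧸ srIdeal n m a 𝒮) ∧
    IsLocalRing (MvPolynomial (Fin m) ℂ ⧸ srIdeal n m a 𝒮) ∧
    ∀ w : Fin m → ℂ, (∀ p ∈ srIdeal n m a 𝒮, MvPolynomial.eval w p = 0) → w = 0 := by
  set I := srIdeal n m a 𝒮 with hI
  -- 𝒮 is nonempty
  obtain ⟨σ₀, hσ₀, -⟩ := hcomplete 0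
  -- The core geometric statement: the only common zero is the origin.
  have hzero : ∀ w : Fin m → ℂ, (∀ p ∈ I, MvPolynomial.eval w p = 0) → w = 0 := by
    intro w hw
    -- linear relations
    have hlin : ∀ k : Fin n, ∑ i, (a i k : ℂ) * w i = 0 := by
      intro k
      have h := hw _ (Ideal.subset_span (Or.inl ⟨k, rfl⟩))
      simpa using h
    -- monomial relations
    have hmon : ∀ τ : Finset (Fin m), (¬ ∃ σ ∈ 𝒮, τ ⊆ σ) →
        (∀ τ' ⊂ τ, ∃ σ ∈ 𝒮, τ' ⊆ σ) → ∃ i ∈ τ, w i = 0 := by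
      intro τ h1 h2
      have h := hw _ (Ideal.subset_span (Or.inr ⟨τ, h1, h2, rfl⟩))
      rw [map_prod] at h
      simp only [eval_X] at h
      exact Finset.prod_eq_zero_iff.mp h
    -- the support of w
    set s : Finset (Fin m) := Finset.univ.filter (fun i => w i ≠ 0) with hs
    -- the support is contained in a maximal cone
    have hsface : ∃ σ ∈ 𝒮, s ⊆ σ := by
      by_contra hns
      set T : Finset (Finset (Fin m)) :=
        s.powerset.filter (fun τ => ¬ ∃ σ ∈ 𝒮, τ ⊆ σ) with hT
      have hTne : T.Nonempty := ⟨s, by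
        rw [hT, Finset.mem_filter, Finset.mem_powerset]
        exact ⟨Finset.Subset.refl s, hns⟩⟩
      obtain ⟨τ, hτT, hτmin⟩ := T.exists_min_image Finset.card hTne
      rw [hT, Finset.mem_filter, Finset.mem_powerset] at hτT
      have hprim : ∀ τ' ⊂ τ, ∃ σ ∈ 𝒮, τ' ⊆ σ := by
        intro τ' hτ'
        by_contra h'
        have hmem : τ' ∈ T := by
          rw [hT, Finset.mem_filter, Finset.mem_powerset]
          exact ⟨hτ'.subset.trans hτT.1, h'⟩
        exact absurd (Finset.card_lt_card hτ') (not_lt.mpr (hτmin τ' hmem))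
      obtain ⟨i, hiτ, hwi⟩ := hmon τ hτT.2 hprim
      have := hτT.1 hiτ
      rw [hs, Finset.mem_filter] at this
      exact this.2 hwi
    obtain ⟨σ, hσ𝒮, hsσ⟩ := hsface
    have hwz : ∀ i, i ∉ σ → w i = 0 := by
      intro i hi
      by_contra h
      exact hi (hsσ (by rw [hs, Finset.mem_filter]; exact ⟨Finset.mem_univ i, h⟩))
    -- the rays of σ are linearly independent over ℂ
    obtain ⟨-, hspan⟩ := hsmooth σ hσ𝒮
    set A : {i // i ∈ σ} → (Fin n → ℂ) := fun i k => (a i.1 k : ℂ) with hA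
    -- the cast map
    let f : (Fin n → ℤ) →ₗ[ℤ] (Fin n → ℂ) :=
      { toFun := fun x k => (x k : ℂ)
        map_add' := fun x y => by funext k; simp
        map_smul' := fun c x => by funext k; simp }
    have hAspan : ⊤ ≤ Submodule.span ℂ (Set.range A) := by
      intro v _
      -- the image of f lands in the ℂ-span of A
      have hf : ∀ x : Fin n → ℤ, f x ∈ Submodule.span ℂ (Set.range A) := by
        intro x
        have hx : x ∈ Submodule.span ℤ (a '' ↑σ) := hspan ▸ Submodule.mem_top
        have : f x ∈ Submodule.map f (Submodule.span ℤ (a '' ↑σ)) :=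
          Submodule.mem_map_of_mem hx
        rw [Submodule.map_span] at this
        have hsub : f '' (a '' ↑σ) ⊆ Set.range A := by
          rintro _ ⟨_, ⟨i, hi, rfl⟩, rfl⟩
          exact ⟨⟨i, hi⟩, rfl⟩
        have h1 : Submodule.span ℤ (f '' (a '' ↑σ)) ≤
            Submodule.span ℤ (Set.range A) := Submodule.span_mono hsub
        have h2 : (Submodule.span ℤ (Set.range A) : Set (Fin n → ℂ)) ⊆
            Submodule.span ℂ (Set.range A) := Submodule.span_subset_span ℤ ℂ _
        exact h2 (h1 this)
      -- each standard basis vector is such an image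
      have hbasis : ∀ k : Fin n, Pi.single k (1 : ℂ) ∈
          Submodule.span ℂ (Set.range A) := by
        intro k
        have : f (Pi.single k (1 : ℤ)) = Pi.single k (1 : ℂ) := by
          funext j
          by_cases hj : j = k <;> simp [f, hj, Pi.single_apply]
        exact this ▸ hf (Pi.single k 1)
      -- so the span is everything
      have : Set.range (Pi.basisFun ℂ (Fin n)) ⊆
          (Submodule.span ℂ (Set.range A) : Set (Fin n → ℂ)) := by
        rintro _ ⟨k, rfl⟩
        simpa [Pi.basisFun_apply] using hbasis k
      have := Submodule.span_le.mpr this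
      rw [Module.Basis.span_eq] at this
      exact this Submodule.mem_top
    have hAind : LinearIndependent ℂ A := by
      apply linearIndependent_of_top_le_span_of_card_eq_finrank hAspan
      simp [Fintype.card_coe, hcard σ hσ𝒮]
    -- the linear relations kill w on σ
    have hsum : ∑ i : {i // i ∈ σ}, w i.1 • A i = 0 := by
      funext k
      simp only [Finset.sum_apply, Pi.zero_apply, Pi.smul_apply, hA, smul_eq_mul]
      have h1 : ∑ i : {i // i ∈ σ}, w i.1 * (a i.1 k : ℂ) =
          ∑ i ∈ σ, w i * (a i k : ℂ) := Finset.sum_coe_sort σ (fun i => w i * (a i k : ℂ))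
      rw [h1]
      have h2 : ∑ i ∈ σ, w i * (a i k : ℂ) = ∑ i, w i * (a i k : ℂ) := by
        apply Finset.sum_subset (Finset.subset_univ σ)
        intro i _ hi
        rw [hwz i hi, zero_mul]
      rw [h2, ← hlin k]
      exact Finset.sum_congr rfl fun i _ => mul_comm _ _
    have hcoef := Fintype.linearIndependent_iff.mp hAind (fun i => w i.1) hsum
    funext i
    by_cases hi : i ∈ σ
    · exact hcoef ⟨i, hi⟩
    · exact hwz i hi
  -- the origin is a common zero
  have h0 : ∀ p ∈ I, MvPolynomial.eval (0 : Fin m → ℂ) p = 0 := by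
    intro p hp
    have : I ≤ RingHom.ker (MvPolynomial.eval (0 : Fin m → ℂ)) := by
      rw [hI, srIdeal, Ideal.span_le]
      rintro q (⟨k, rfl⟩ | ⟨τ, h1, h2, rfl⟩)
      · simp [RingHom.mem_ker]
      · simp only [SetLike.mem_coe, RingHom.mem_ker, map_prod]
        have hτ : τ.Nonempty := by
          rcases Finset.eq_empty_or_nonempty τ with rfl | h
          · exact absurd ⟨σ₀, hσ₀, Finset.empty_subset σ₀⟩ h1
          · exact h
        obtain ⟨i, hi⟩ := hτ
        exact Finset.prod_eq_zero hi (by simp)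
    exact this hp
  -- each variable is in the radical of I (Nullstellensatz)
  have hXrad : ∀ i : Fin m, (X i : MvPolynomial (Fin m) ℂ) ∈ I.radical := by
    intro i
    rw [← MvPolynomial.vanishingIdeal_zeroLocus_eq_radical (K := ℂ) I]
    rw [MvPolynomial.mem_vanishingIdeal_iff]
    intro x hx
    rw [MvPolynomial.mem_zeroLocus_iff] at hx
    have := hzero x hx
    rw [this, aeval_X]
    rfl
  -- extract a uniform power
  have hXpow : ∀ i : Fin m, ∃ N : ℕ, (X i : MvPolynomial (Fin m) ℂ) ^ N ∈ I :=
    fun i => hXrad i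
  choose Nf hNf using hXpow
  set N : ℕ := (Finset.univ.sup Nf) + 1 with hNdef
  have hNI : ∀ i : Fin m, ∀ M : ℕ, N ≤ M → (X i : MvPolynomial (Fin m) ℂ) ^ M ∈ I := by
    intro i M hM
    have hle : Nf i ≤ M :=
      le_trans (le_trans (Finset.le_sup (Finset.mem_univ i)) (Nat.le_succ _)) hM
    have : (X i : MvPolynomial (Fin m) ℂ) ^ M =
        X i ^ (M - Nf i) * X i ^ (Nf i) := by
      rw [← pow_add, Nat.sub_add_cancel hle]
    rw [this]
    exact Ideal.mul_mem_left _ _ (hNf i)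
  -- finite dimensionality
  have hfd : FiniteDimensional ℂ (MvPolynomial (Fin m) ℂ ⧸ I) := by
    let B : (Fin m → Fin N) → (MvPolynomial (Fin m) ℂ ⧸ I) :=
      fun g => Ideal.Quotient.mk I (∏ i, X i ^ (g i : ℕ))
    have hspanB : ∀ p : MvPolynomial (Fin m) ℂ,
        Ideal.Quotient.mk I p ∈ Submodule.span ℂ (Set.range B) := by
      intro p
      induction p using MvPolynomial.induction_on' with
      | monomial d c =>
        by_cases hd : ∀ i, d i < N
        · have hmono : (monomial d c : MvPolynomial (Fin m) ℂ) =
              C c * ∏ i, X i ^ d i := by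
            rw [monomial_eq]
            congr 1
            rw [Finsupp.prod]
            apply Finset.prod_subset (Finset.subset_univ _)
            intro i _ hi
            rw [Finsupp.notMem_support_iff] at hi
            rw [hi, pow_zero]
          have : Ideal.Quotient.mk I (monomial d c) =
              c • B (fun i => ⟨d i, hd i⟩) := by
            simp only [B]
            rw [hmono, ← smul_eq_C_mul, ← Ideal.Quotient.mkₐ_eq_mk ℂ,
              map_smul, Ideal.Quotient.mkₐ_eq_mk]
          rw [this]
          exact Submodule.smul_mem _ _ (Submodule.subset_span ⟨_, rfl⟩)
        · push_neg at hd
          obtain ⟨i, hi⟩ := hd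
          have hle : Finsupp.single i N ≤ d := Finsupp.single_le_iff.mpr hi
          have hmem : (monomial d c : MvPolynomial (Fin m) ℂ) ∈ I := by
            have hdecomp : d = Finsupp.single i N + (d - Finsupp.single i N) :=
              (add_tsub_cancel_of_le hle).symm
            have : (monomial d c : MvPolynomial (Fin m) ℂ) =
                X i ^ N * monomial (d - Finsupp.single i N) c := by
              rw [X_pow_eq_monomial, monomial_mul, one_mul, ← hdecomp]
            rw [this]
            exact Ideal.mul_mem_right _ _ (hNI i N le_rfl)
          rw [Ideal.Quotient.eq_zero_iff_mem.mpr hmem]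
          exact Submodule.zero_mem _
      | add p q hp hq =>
        rw [map_add]
        exact Submodule.add_mem _ hp hq
    have : ⊤ ≤ Submodule.span ℂ (Set.range B) := by
      intro x _
      obtain ⟨p, rfl⟩ := Ideal.Quotient.mk_surjective x
      exact hspanB p
    classical
    have hfg : (⊤ : Submodule ℂ (MvPolynomial (Fin m) ℂ ⧸ I)).FG := by
      refine ⟨Finset.univ.image B, ?_⟩
      rw [Finset.coe_image, Finset.coe_univ, Set.image_univ]
      exact le_antisymm le_top this
    exact ⟨hfg⟩
  refine ⟨hfd, ?_, hzero⟩
  -- local ring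
  have hnontriv : Nontrivial (MvPolynomial (Fin m) ℂ ⧸ I) := by
    apply Ideal.Quotient.nontrivial_iff.mpr
    intro htop
    have := h0 1 (htop ▸ Submodule.mem_top)
    simp at this
  have hspanXrad : Ideal.span (Set.range (X : Fin m → MvPolynomial (Fin m) ℂ)) ≤
      I.radical := by
    rw [Ideal.span_le]
    rintro _ ⟨i, rfl⟩
    exact hXrad i
  apply IsLocalRing.of_isUnit_or_isUnit_one_sub_self
  intro q
  obtain ⟨p, rfl⟩ := Ideal.Quotient.mk_surjective q
  set c : ℂ := constantCoeff p with hc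
  have hnil : IsNilpotent (Ideal.Quotient.mk I (p - C c)) := by
    have hmem : p - C c ∈ I.radical := hspanXrad (sub_C_constantCoeff_mem_span_X p)
    obtain ⟨k, hk⟩ := hmem
    exact ⟨k, by rw [← map_pow, Ideal.Quotient.eq_zero_iff_mem]; exact hk⟩
  have hdecomp : Ideal.Quotient.mk I p =
      Ideal.Quotient.mk I (C c) + Ideal.Quotient.mk I (p - C c) := by
    rw [← map_add]; congr 1; ring
  by_cases hc0 : c = 0
  · right
    have hp' : p - C c = p := by rw [hc0, map_zero, sub_zero]
    exact IsNilpotent.isUnit_one_sub (hp' ▸ hnil)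
  · left
    have hunit : IsUnit (Ideal.Quotient.mk I (C c)) :=
      (isUnit_iff_ne_zero.mpr hc0).map
        ((Ideal.Quotient.mk I).comp (C : ℂ →+* MvPolynomial (Fin m) ℂ))
    rw [hdecomp]
    exact hnil.isUnit_add_left_of_commute hunit (Commute.all _ _)
end

section
/- Let l^0 in Z^m be a relation among the ray generators of a complete smooth fan Sigma such that l^0 is not in the Mori cone Eff. Then the Gamma-series coefficient q^{l^0} z^{-|l^0|} / prod_{i=1}^m Gamma(D_i + l^0_i + 1), computed in the cohomology ring H^*(X,C) (where D_i are the torus invariant divisor classes and 1/Gamma(D_i + l^0_i + 1) for l^0_i < 0 is divisible by D_i), vanishes in H^*(X,C). -/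
/-- The `j`-th Taylor coefficient of the entire function `1/Γ` at the point `k+1`,
i.e. the coefficient of `D^j` in `1/Γ(D + k + 1)`. -/
noncomputable def invGammaCoef (k : ℤ) (j : ℕ) : ℂ :=
  iteratedDeriv j (fun s : ℂ => (Complex.Gamma s)⁻¹) ((k : ℂ) + 1) / (Nat.factorial j : ℂ)

/-- If the relation `l⁰` among the rays of a complete smooth fan is not effective
(does not lie in the Mori cone), then the Gamma-series coefficient
`∏_{i=1}^m 1/Γ(D_i + l⁰_i + 1)`, computed in `H^*(X,ℂ)` with `D_i` the torus invariant
divisor classes (which are nilpotent), vanishes. -/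
theorem stmt11 (n m : ℕ) (a : Fin m → Fin n → ℤ)
    (𝒮 : Finset (Finset (Fin m)))
    (hcard : ∀ σ ∈ 𝒮, σ.card = n)
    (hray : ∀ i : Fin m, ∃ σ ∈ 𝒮, i ∈ σ)
    (hcomplete : ∀ x : Fin n → ℝ, ∃ σ ∈ 𝒮, ∃ c : Fin m → ℝ,
      (∀ i, 0 ≤ c i) ∧ (∀ i, i ∉ σ → c i = 0) ∧
        x = ∑ i, c i • (fun k => ((a i k : ℝ))))
    (hsmooth : ∀ σ ∈ 𝒮,
      LinearIndependent ℤ (fun i : {i // i ∈ σ} => a i.1) ∧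
        Submodule.span ℤ (a '' ↑σ) = ⊤)
    (l0 : Fin m → ℤ) (hrel : ∑ i, l0 i • a i = 0)
    (hnoteff : (fun i => ((l0 i : ℝ))) ∉
      {x : Fin m → ℝ | ∃ (N : ℕ) (c : Fin N → ℝ) (v : Fin N → Fin m → ℤ),
        (∀ j, 0 ≤ c j) ∧ (∀ j, ∑ i, v j i • a i = 0) ∧
        (∀ j, ∃ σ ∈ 𝒮, ∀ i, i ∉ σ → 0 ≤ v j i) ∧
        x = ∑ j, c j • (fun i => ((v j i : ℝ)))})
    (N : ℕ)
    (hN : ∀ i : Fin m,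
      (Ideal.Quotient.mk (srIdeal n m a 𝒮) (MvPolynomial.X i)) ^ N = 0) :
    (∏ i : Fin m, ∑ j ∈ Finset.range N,
        invGammaCoef (l0 i) j •
          (Ideal.Quotient.mk (srIdeal n m a 𝒮) (MvPolynomial.X i)) ^ j) = 0 := by

  classical
  set Q := srIdeal n m a 𝒮 with hQ
  set D : Fin m → MvPolynomial (Fin m) ℂ ⧸ Q := fun i => Ideal.Quotient.mk Q (MvPolynomial.X i)
    with hD
  set f : Fin m → MvPolynomial (Fin m) ℂ ⧸ Q :=
    fun i => ∑ j ∈ Finset.range N, invGammaCoef (l0 i) j • D i ^ j with hf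
  set τ : Finset (Fin m) := Finset.univ.filter fun i => l0 i < 0 with hτdef
  -- the set of negative indices is not contained in any cone
  have hτ : ¬∃ σ ∈ 𝒮, τ ⊆ σ := by
    rintro ⟨σ, hσ, hsub⟩
    apply hnoteff
    refine ⟨1, fun _ => 1, fun _ => l0, fun _ => zero_le_one, fun _ => hrel,
      fun _ => ⟨σ, hσ, ?_⟩, ?_⟩
    · intro i hi
      by_contra h
      push_neg at h
      exact hi (hsub (Finset.mem_filter.2 ⟨Finset.mem_univ i, h⟩))
    · funext i
      simp [Fin.sum_univ_one]
  -- a minimal non-face inside τ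
  obtain ⟨τ', hτ'mem, hmin⟩ := Finset.exists_min_image
    (τ.powerset.filter fun T => ¬∃ σ ∈ 𝒮, T ⊆ σ) Finset.card
    ⟨τ, Finset.mem_filter.2 ⟨Finset.mem_powerset.2 (Finset.Subset.refl τ), hτ⟩⟩
  obtain ⟨hτ'τ, hτ'nf⟩ := Finset.mem_filter.1 hτ'mem
  have hτ'τ : τ' ⊆ τ := Finset.mem_powerset.1 hτ'τ
  have hminface : ∀ T ⊂ τ', ∃ σ ∈ 𝒮, T ⊆ σ := by
    intro T hT
    by_contra h
    have hTmem : T ∈ τ.powerset.filter fun T => ¬∃ σ ∈ 𝒮, T ⊆ σ :=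
      Finset.mem_filter.2 ⟨Finset.mem_powerset.2 (hT.subset.trans hτ'τ), h⟩
    exact absurd (hmin T hTmem) (not_le.2 (Finset.card_lt_card hT))
  have hgen : (∏ i ∈ τ', MvPolynomial.X i : MvPolynomial (Fin m) ℂ) ∈ Q := by
    apply Ideal.subset_span
    exact Or.inr ⟨τ', hτ'nf, hminface, rfl⟩
  have hprodmem : (∏ i ∈ τ, MvPolynomial.X i : MvPolynomial (Fin m) ℂ) ∈ Q := by
    rw [← Finset.prod_sdiff hτ'τ]
    exact Ideal.mul_mem_left _ _ hgen
  have hDzero : ∏ i ∈ τ, D i = 0 := by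
    have h0 : Ideal.Quotient.mk Q (∏ i ∈ τ, MvPolynomial.X i) = 0 :=
      Ideal.Quotient.eq_zero_iff_mem.2 hprodmem
    simpa [hD, map_prod] using h0
  -- each factor with negative l0 is divisible by D i
  have hdvd : ∀ i ∈ τ, D i ∣ f i := by
    intro i hi
    have hl : l0 i < 0 := (Finset.mem_filter.1 hi).2
    have hc0 : invGammaCoef (l0 i) 0 = 0 := by
      unfold invGammaCoef
      rw [iteratedDeriv_zero]
      have hg : Complex.Gamma ((l0 i : ℂ) + 1) = 0 := by
        rw [Complex.Gamma_eq_zero_iff]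
        refine ⟨(-(l0 i) - 1).toNat, ?_⟩
        have htn : ((-(l0 i) - 1).toNat : ℤ) = -(l0 i) - 1 :=
          Int.toNat_of_nonneg (by omega)
        calc (l0 i : ℂ) + 1 = -(((-(l0 i) - 1 : ℤ) : ℂ)) := by push_cast; ring
          _ = -((((-(l0 i) - 1).toNat : ℤ) : ℂ)) := by rw [htn]
          _ = -(((-(l0 i) - 1).toNat : ℕ) : ℂ) := by push_cast; ring
      simp [hg]
    cases N with
    | zero => simp [hf]
    | succ N' =>
      refine ⟨∑ j ∈ Finset.range N', invGammaCoef (l0 i) (j + 1) • D i ^ j, ?_⟩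
      rw [hf]
      simp only
      rw [Finset.sum_range_succ', hc0]
      rw [Finset.mul_sum]
      simp [pow_succ', mul_smul_comm]
  have hdvdall : (∏ i ∈ τ, D i) ∣ ∏ i, f i := by
    have h1 : (∏ i ∈ τ, D i) ∣ ∏ i ∈ τ, f i := Finset.prod_dvd_prod_of_dvd _ _ hdvd
    exact h1.trans (Finset.prod_dvd_prod_of_subset _ _ f (Finset.subset_univ τ))
  rw [hDzero] at hdvdall
  exact zero_dvd_iff.1 hdvdall
end

section
/- Let H = H^*(X,C) for X a smooth projective variety of dimension n satisfying Hard Lefschetz with respect to L = c_1(X)∪. Suppose P : H × H -> C[z^{±}] is a bilinear pairing satisfying P(w,w') = c(w,w') z^{k+l} for homogeneous w in H^{2k}, w' in H^{2l} with constants c(w,w'), the flatness relation z∂_z P(w,w') = P(∇w, w') + P(w, ∇w') with z∇(w) = (deg/2)·z·w − c_1(X)∪w for homogeneous w, and that P takes values in z^n·C on all of H ⊗ H. Then c(w,w') = 0 whenever k + l > n; i.e., P is concentrated in z^n·C exactly on complementary-degree pairs. -/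
/-- Let `H = ⊕_{k≤n} H^{2k}` be the (even) cohomology of a smooth projective variety of
dimension `n` satisfying Hard Lefschetz with respect to `L = c_1(X)∪`.  Let
`P : H ⊗ H → ℂ[z]` be a bilinear, `(-1)^n`-symmetric pairing such that `P(w,w')` is a
constant multiple of `z^{k+l}` for `w ∈ H^{2k}`, `w' ∈ H^{2l}`, satisfying the flatness
relation `z·(z∂_z P(w,w')) = (k+l)·z·P(w,w') - P(Lw,w') - P(w,Lw')`
(coming from `z∇(w) = (deg/2)·z·w - c_1(X)∪w`), and taking values in `z^n·ℂ[z]`.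
Then `P(w,w') = 0` whenever `k + l > n`. -/
theorem stmt13 {H : Type} [AddCommGroup H] [Module ℂ H] [FiniteDimensional ℂ H]
    (n : ℕ) (Hk : ℕ → Submodule ℂ H)
    (hint : DirectSum.IsInternal Hk)
    (htop : ∀ k, n < k → Hk k = ⊥)
    (L : Module.End ℂ H)
    (hL : ∀ k, Submodule.map L (Hk k) ≤ Hk (k + 1))
    (hHL : ∀ j : ℕ, 2 * j ≤ n →
      (∀ x ∈ Hk j, (L ^ (n - 2 * j)) x = 0 → x = 0) ∧
      Submodule.map (L ^ (n - 2 * j)) (Hk j) = Hk (n - j))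
    (P : H →ₗ[ℂ] H →ₗ[ℂ] Polynomial ℂ)
    (hgr : ∀ k l : ℕ, ∀ w ∈ Hk k, ∀ w' ∈ Hk l,
      ∃ c : ℂ, P w w' = Polynomial.C c * Polynomial.X ^ (k + l))
    (hsym : ∀ w w' : H, P w w' = (-1 : ℂ) ^ n • ((P w' w).comp (-Polynomial.X)))
    (hflat : ∀ k l : ℕ, ∀ w ∈ Hk k, ∀ w' ∈ Hk l,
      Polynomial.X * (Polynomial.X * Polynomial.derivative (P w w')) =
        ((k + l : ℕ) : ℂ) • (Polynomial.X * P w w') - P (L w) w' - P w (L w'))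
    (hvaln : ∀ w w' : H, ∀ j : ℕ, j < n → (P w w').coeff j = 0) :
    ∀ k l : ℕ, n < k + l → ∀ w ∈ Hk k, ∀ w' ∈ Hk l, P w w' = 0 := by

  -- powers of L respect the grading
  have hpow : ∀ (m k : ℕ), ∀ w ∈ Hk k, (L ^ m) w ∈ Hk (k + m) := by
    intro m
    induction m with
    | zero => intro k w hw; simpa using hw
    | succ m ih =>
      intro k w hw
      have h1 : (L ^ (m + 1)) w = L ((L ^ m) w) := by
        rw [pow_succ']; rfl
      rw [h1]
      exact hL (k + m) (Submodule.mem_map_of_mem (ih k w hw))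
  -- single move lemma
  have hmove1 : ∀ (k l : ℕ), ∀ w ∈ Hk k, ∀ w' ∈ Hk l, P (L w) w' = - P w (L w') := by
    intro k l w hw w' hw'
    obtain ⟨c, hc⟩ := hgr k l w hw w' hw'
    have hf := hflat k l w hw w' hw'
    rw [hc, Polynomial.smul_eq_C_mul] at hf
    have hder : Polynomial.X * (Polynomial.X *
        Polynomial.derivative (Polynomial.C c * Polynomial.X ^ (k + l)))
        = Polynomial.C ((k + l : ℕ) : ℂ) *
          (Polynomial.X * (Polynomial.C c * Polynomial.X ^ (k + l))) := by
      cases h : k + l with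
      | zero => simp
      | succ s =>
        rw [Polynomial.derivative_C_mul, Polynomial.derivative_X_pow]
        push_cast
        ring
    rw [hder] at hf
    linear_combination hf
  -- iterated move lemma
  have hmovem : ∀ (m k l : ℕ), ∀ w ∈ Hk k, ∀ w' ∈ Hk l,
      P ((L ^ m) w) w' = (-1 : ℂ) ^ m • P w ((L ^ m) w') := by
    intro m
    induction m with
    | zero => intro k l w hw w' hw'; simp
    | succ m ih =>
      intro k l w hw w' hw'
      have hLw : L w ∈ Hk (k + 1) := hL k (Submodule.mem_map_of_mem hw)
      have h1 : (L ^ (m + 1)) w = (L ^ m) (L w) := by rw [pow_succ]; rfl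
      have h2 : L ((L ^ m) w') = (L ^ (m + 1)) w' := by rw [pow_succ']; rfl
      rw [h1, ih (k + 1) l (L w) hLw w' hw',
        hmove1 k (l + m) w hw ((L ^ m) w') (hpow m l w' hw'), h2]
      simp [pow_succ, mul_smul]
  -- swap lemma from symmetry
  have hswap0 : ∀ w w' : H, P w' w = 0 → P w w' = 0 := by
    intro w w' h
    rw [hsym w w', h, Polynomial.zero_comp, smul_zero]
  -- main induction on measure
  have main : ∀ v k l : ℕ, 2 * n + l ≤ k + v → n < k + l →
      ∀ w ∈ Hk k, ∀ w' ∈ Hk l, P w w' = 0 := by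
    intro v
    induction v using Nat.strong_induction_on with
    | _ v IH =>
      intro k l hv hkl w hw w' hw'
      by_cases hk : n < k
      · have hw0 : w = 0 := by rw [htop k hk] at hw; exact hw
        simp [hw0]
      by_cases hl : n < l
      · have hw0 : w' = 0 := by rw [htop l hl] at hw'; exact hw'
        simp [hw0]
      push_neg at hk hl
      by_cases hlt : k < l
      · exact hswap0 w w'
          (IH (v - 1) (by omega) l k (by omega) (by omega) w' hw' w hw)
      · push_neg at hlt
        set j := n - k with hj
        have hj2 : 2 * j ≤ n := by omega
        obtain ⟨-, hsurj⟩ := hHL j hj2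
        have hkeq : n - j = k := by omega
        have hwmem : w ∈ Submodule.map (L ^ (n - 2 * j)) (Hk j) := by
          rw [hsurj, hkeq]; exact hw
        obtain ⟨u, hu, hLu⟩ := hwmem
        set m := n - 2 * j with hm
        rw [← hLu, hmovem m j l u hu w' hw']
        have hw'' : (L ^ m) w' ∈ Hk (l + m) := hpow m l w' hw'
        by_cases hbig : n < l + m
        · have h0 : (L ^ m) w' = 0 := by rw [htop _ hbig] at hw''; exact hw''
          rw [h0]; simp
        · push_neg at hbig
          have h0 : P ((L ^ m) w') u = 0 :=
            IH (v - 1) (by omega) (l + m) j (by omega) (by omega)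
              ((L ^ m) w') hw'' u hu
          rw [hswap0 u ((L ^ m) w') h0, smul_zero]
  intro k l hkl w hw w' hw'
  exact main (2 * n + l) k l (by omega) hkl w hw w' hw'
end

section
/- Let R = C[w_0,...,w_m] with the Z^{n+1}-grading deg(w_i) = −ã_i where ã_0=(1,0), ã_i=(1,a_i), for a_1,...,a_m the rays of a complete smooth weak Fano fan, and S = R/I the toric ring, which is normal Cohen–Macaulay. Then the canonical module of S satisfies ω_S ≅ S((1,0)) as Z^{n+1}-graded S-modules; i.e., ω_S is the ideal of S generated by monomials whose exponents are interior points of the semigroup, and these interior points are exactly (1,0) + N·Atilde. -/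
namespace Stmt18aux

variable {n m : ℕ} (a : Fin m → Fin n → ℤ)

def rAt (o : Option (Fin m)) : Fin (n + 1) → ℝ := fun k => ((atilde a o k : ℝ))

def rA (i : Fin m) : Fin n → ℝ := fun k => ((a i k : ℝ))

lemma rAt_zero (o : Option (Fin m)) : rAt a o 0 = 1 := by simp [rAt, atilde]
lemma rAt_none_succ (j : Fin n) : rAt a none j.succ = 0 := by simp [rAt, atilde]
lemma rAt_some_succ (i : Fin m) (j : Fin n) : rAt a (some i) j.succ = (a i j : ℝ) := by
  simp [rAt, atilde]

def Cset : Set (Fin (n + 1) → ℝ) :=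
  {y | ∃ c : Option (Fin m) → ℝ, (∀ o, 0 ≤ c o) ∧
    y = ∑ o, c o • (fun k => ((atilde a o k : ℝ)))}

lemma Cset_add {y y' : Fin (n+1) → ℝ} (hy : y ∈ Cset a) (hy' : y' ∈ Cset a) :
    y + y' ∈ Cset a := by
  obtain ⟨c, hc0, rfl⟩ := hy
  obtain ⟨c', hc0', rfl⟩ := hy'
  exact ⟨c + c', fun o => add_nonneg (hc0 o) (hc0' o), by
    rw [← Finset.sum_add_distrib]
    exact Finset.sum_congr rfl fun o _ => by simp [add_smul]⟩

lemma interior_add_mem {y y' : Fin (n+1) → ℝ} (hy : y ∈ interior (Cset a))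
    (hy' : y' ∈ Cset a) : y + y' ∈ interior (Cset a) := by
  have hopen : IsOpen ((fun z => z + y') '' interior (Cset a)) :=
    (Homeomorph.addRight y').isOpenMap _ isOpen_interior
  have hsub : ((fun z => z + y') '' interior (Cset a)) ⊆ Cset a := by
    rintro - ⟨z, hz, rfl⟩
    exact Cset_add a (interior_subset hz) hy'
  exact interior_maximal hsub hopen ⟨y, hy, rfl⟩

lemma e_mem_interior {𝒮 : Finset (Finset (Fin m))}
    (hcomplete : ∀ x : Fin n → ℝ, ∃ σ ∈ 𝒮, ∃ c : Fin m → ℝ,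
      (∀ i, 0 ≤ c i) ∧ (∀ i, i ∉ σ → c i = 0) ∧
        x = ∑ i, c i • (fun k => ((a i k : ℝ)))) :
    rAt a none ∈ interior (Cset a) := by
  choose σf hσf cf hc0 hcsupp hceq using hcomplete
  clear hσf hcsupp
  set cp : Fin n → Fin m → ℝ := fun j => cf (Pi.single j 1) with hcp
  set cm : Fin n → Fin m → ℝ := fun j => cf (-(Pi.single j 1)) with hcm
  set K : ℝ := ∑ j : Fin n, ((∑ i : Fin m, cp j i) + (∑ i : Fin m, cm j i)) with hKdef
  have hK : 0 ≤ K := by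
    apply Finset.sum_nonneg
    intro j _
    have h1 : 0 ≤ ∑ i : Fin m, cp j i := Finset.sum_nonneg fun i _ => hc0 _ i
    have h2 : 0 ≤ ∑ i : Fin m, cm j i := Finset.sum_nonneg fun i _ => hc0 _ i
    linarith
  have h2pos : (0:ℝ) < K + 2 := by linarith
  set ε : ℝ := (K + 2)⁻¹ with hεdef
  have hε : 0 < ε := inv_pos.mpr h2pos
  have hεK : ε * K + ε ≤ 1 := by
    have : ε * (K + 1) ≤ 1 := by
      rw [hεdef, inv_mul_le_iff₀ h2pos]
      linarith
    nlinarith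
  have hball : Metric.ball (rAt a none) ε ⊆ Cset a := by
    intro z hz
    have hcoord : ∀ k, |z k - rAt a none k| < ε := by
      intro k
      have h1 := dist_le_pi_dist z (rAt a none) k
      rw [Real.dist_eq] at h1
      exact lt_of_le_of_lt h1 (Metric.mem_ball.mp hz)
    set zp : Fin n → ℝ := fun j => max (z j.succ) 0 with hzp
    set zm : Fin n → ℝ := fun j => max (-(z j.succ)) 0 with hzm
    have hzp0 : ∀ j, 0 ≤ zp j := fun j => le_max_right _ _
    have hzm0 : ∀ j, 0 ≤ zm j := fun j => le_max_right _ _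
    have hzpε : ∀ j, zp j ≤ ε := by
      intro j
      have := hcoord j.succ
      rw [rAt_none_succ, sub_zero] at this
      have h1 : z j.succ ≤ |z j.succ| := le_abs_self _
      exact max_le (by linarith) hε.le
    have hzmε : ∀ j, zm j ≤ ε := by
      intro j
      have := hcoord j.succ
      rw [rAt_none_succ, sub_zero] at this
      have h1 : -(z j.succ) ≤ |z j.succ| := neg_le_abs _
      exact max_le (by linarith) hε.le
    set Ci : Fin m → ℝ := fun i => ∑ j : Fin n, (zp j * cp j i + zm j * cm j i) with hCi
    have hCi0 : ∀ i, 0 ≤ Ci i := by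
      intro i
      apply Finset.sum_nonneg
      intro j _
      have := hc0 (Pi.single j 1) i
      have := hc0 (-(Pi.single j 1)) i
      positivity
    have hCisum : ∑ i : Fin m, Ci i ≤ ε * K := by
      have h1 : ∑ i : Fin m, Ci i
          = ∑ j : Fin n, (zp j * (∑ i : Fin m, cp j i) + zm j * (∑ i : Fin m, cm j i)) := by
        rw [hCi, Finset.sum_comm]
        refine Finset.sum_congr rfl fun j _ => ?_
        rw [Finset.sum_add_distrib, Finset.mul_sum, Finset.mul_sum]
      rw [h1, hKdef, Finset.mul_sum]
      refine Finset.sum_le_sum fun j _ => ?_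
      have hp : 0 ≤ ∑ i : Fin m, cp j i := Finset.sum_nonneg fun i _ => hc0 _ i
      have hm : 0 ≤ ∑ i : Fin m, cm j i := Finset.sum_nonneg fun i _ => hc0 _ i
      have := hzpε j; have := hzmε j
      nlinarith
    have hz0 : 1 - ε < z 0 := by
      have := hcoord 0
      rw [rAt_zero] at this
      have := abs_lt.mp this
      linarith
    refine ⟨fun o => Option.elim o (z 0 - ∑ i : Fin m, Ci i) Ci, ?_, ?_⟩
    · intro o
      cases o with
      | none => simp only [Option.elim]; linarith
      | some i => exact hCi0 i
    · have at_zero : ∀ o : Option (Fin m), atilde a o 0 = 1 := fun o => by simp [atilde]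
      have at_none_succ : ∀ j : Fin n, atilde a none j.succ = 0 := fun j => by simp [atilde]
      have at_some_succ : ∀ (i : Fin m) (j : Fin n), atilde a (some i) j.succ = a i j :=
        fun i j => by simp [atilde]
      funext k
      rw [Finset.sum_apply]
      refine Fin.cases ?_ ?_ k
      · simp only [Pi.smul_apply, smul_eq_mul, at_zero, Int.cast_one, mul_one,
          Fintype.sum_option, Option.elim_none, Option.elim_some]
        ring
      · intro j
        simp only [Pi.smul_apply, smul_eq_mul, Fintype.sum_option, Option.elim_none,
          Option.elim_some, at_none_succ, at_some_succ, Int.cast_zero, mul_zero, zero_add]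
        have hsingle : ∀ j' : Fin n, ∑ i : Fin m, cp j' i * (a i j : ℝ)
            = (Pi.single j' (1:ℝ) : Fin n → ℝ) j := by
          intro j'
          have h := congrFun (hceq (Pi.single j' 1)) j
          rw [Finset.sum_apply] at h
          simp only [Pi.smul_apply, smul_eq_mul] at h
          exact h.symm
        have hsingle' : ∀ j' : Fin n, ∑ i : Fin m, cm j' i * (a i j : ℝ)
            = -((Pi.single j' (1:ℝ) : Fin n → ℝ) j) := by
          intro j'
          have h := congrFun (hceq (-(Pi.single j' 1))) j
          rw [Finset.sum_apply] at h
          simp only [Pi.smul_apply, smul_eq_mul, Pi.neg_apply] at h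
          linarith [h]
        have key : ∑ i : Fin m, Ci i * (a i j : ℝ) = z j.succ := by
          calc ∑ i : Fin m, Ci i * (a i j : ℝ)
              = ∑ i : Fin m, ∑ j' : Fin n,
                  (zp j' * (cp j' i * (a i j : ℝ)) + zm j' * (cm j' i * (a i j : ℝ))) := by
                refine Finset.sum_congr rfl fun i _ => ?_
                rw [Finset.sum_mul]
                exact Finset.sum_congr rfl fun j' _ => by ring
            _ = ∑ j' : Fin n, ∑ i : Fin m,
                  (zp j' * (cp j' i * (a i j : ℝ)) + zm j' * (cm j' i * (a i j : ℝ))) :=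
                Finset.sum_comm
            _ = ∑ j' : Fin n, (zp j' * (∑ i : Fin m, cp j' i * (a i j : ℝ))
                  + zm j' * (∑ i : Fin m, cm j' i * (a i j : ℝ))) := by
                refine Finset.sum_congr rfl fun j' _ => ?_
                rw [Finset.sum_add_distrib, Finset.mul_sum, Finset.mul_sum]
            _ = ∑ j' : Fin n, (zp j' - zm j') * ((Pi.single j' (1:ℝ) : Fin n → ℝ) j) := by
                refine Finset.sum_congr rfl fun j' _ => ?_
                rw [hsingle j', hsingle' j']
                ring
            _ = ∑ j' : Fin n, z j'.succ * ((Pi.single j' (1:ℝ) : Fin n → ℝ) j) := by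
                refine Finset.sum_congr rfl fun j' _ => ?_
                rw [show zp j' - zm j' = z j'.succ from max_zero_sub_max_neg_zero_eq_self _]
            _ = z j.succ := by simp [Pi.single_apply]
        exact key.symm
  exact interior_maximal hball Metric.isOpen_ball (Metric.mem_ball_self hε)


lemma sum_subtype_dite {β : Type*} [AddCommMonoid β] (σ : Finset (Fin m))
    (f : {i // i ∈ σ} → β) :
    ∑ i0 : {i // i ∈ σ}, f i0 = ∑ i : Fin m, (if h : i ∈ σ then f ⟨i, h⟩ else 0) := by
  rw [show (∑ i : Fin m, (if h : i ∈ σ then f ⟨i, h⟩ else 0))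
      = ∑ i ∈ σ, (if h : i ∈ σ then f ⟨i, h⟩ else 0) from
    (Finset.sum_subset (Finset.subset_univ σ) (by intro i _ hi; rw [dif_neg hi])).symm]
  rw [← Finset.sum_attach σ (fun i => if h : i ∈ σ then f ⟨i, h⟩ else 0)]
  rw [Finset.univ_eq_attach]
  refine Finset.sum_congr rfl fun x _ => ?_
  rw [dif_pos x.2]

def W (σ : Finset (Fin m)) : Set (Fin n → ℝ) :=
  {y | ∃ d : Fin m → ℝ, (∀ i, 0 ≤ d i) ∧ (∀ i, i ∉ σ → d i = 0) ∧ (∑ i : Fin m, d i) ≤ 1 ∧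
    y = ∑ i : Fin m, d i • (fun k => ((a i k : ℝ)))}

lemma hull_subset_W (σ : Finset (Fin m)) :
    convexHull ℝ (insert (0 : Fin n → ℝ) ((fun i => fun k => ((a i k : ℝ))) '' ↑σ))
      ⊆ W a σ := by
  apply convexHull_min
  · intro y hy
    rcases Set.mem_insert_iff.mp hy with rfl | ⟨i, hi, rfl⟩
    · exact ⟨0, fun i => le_refl 0, fun i _ => rfl, by simp, by simp⟩
    · refine ⟨fun k => if k = i then 1 else 0, ?_, ?_, ?_, ?_⟩
      · intro k; simp only []; split <;> norm_num
      · intro k hk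
        simp only []
        rw [if_neg]
        rintro rfl; exact hk hi
      · rw [Finset.sum_ite_eq' Finset.univ i (fun _ => (1:ℝ))]
        simp
      · rw [show ∑ k : Fin m, (if k = i then (1:ℝ) else 0) • (fun k' => ((a k k' : ℝ)))
            = ∑ k : Fin m, (if k = i then ((fun k' => ((a k k' : ℝ))) : Fin n → ℝ) else 0)
            from Finset.sum_congr rfl fun k _ => by split <;> simp]
        rw [Finset.sum_ite_eq' Finset.univ i]
        simp
  · rintro y1 hy1 y2 hy2 t1 t2 ht1 ht2 hts
    obtain ⟨d1, hd10, hd1s, hd1sum, rfl⟩ := hy1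
    obtain ⟨d2, hd20, hd2s, hd2sum, rfl⟩ := hy2
    refine ⟨fun i => t1 * d1 i + t2 * d2 i, ?_, ?_, ?_, ?_⟩
    · intro i; have := hd10 i; have := hd20 i; positivity
    · intro i hi; simp only []; rw [hd1s i hi, hd2s i hi]; ring
    · rw [Finset.sum_add_distrib, ← Finset.mul_sum, ← Finset.mul_sum]
      nlinarith [Finset.sum_nonneg (fun i (_ : i ∈ Finset.univ) => hd10 i),
        Finset.sum_nonneg (fun i (_ : i ∈ Finset.univ) => hd20 i)]
    · rw [Finset.smul_sum, Finset.smul_sum, ← Finset.sum_add_distrib]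
      refine Finset.sum_congr rfl fun i _ => ?_
      rw [smul_smul, smul_smul, ← add_smul]

lemma interior_mem_rep {𝒮 : Finset (Finset (Fin m))}
    (hray : ∀ i : Fin m, ∃ σ ∈ 𝒮, i ∈ σ)
    (hsmooth : ∀ σ ∈ 𝒮,
      LinearIndependent ℤ (fun i : {i // i ∈ σ} => a i.1) ∧
        Submodule.span ℤ (a '' ↑σ) = ⊤)
    (hconv : Convex ℝ (⋃ σ ∈ 𝒮,
      convexHull ℝ (insert (0 : Fin n → ℝ) ((fun i => fun k => ((a i k : ℝ))) '' ↑σ))))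
    {x : Fin (n + 1) → ℤ}
    (hx : (fun k => ((x k : ℝ))) ∈ interior (Cset a)) :
    ∃ c : Option (Fin m) → ℕ, x = atilde a none + ∑ o, ((c o : ℤ)) • atilde a o := by
  have at_zero : ∀ o : Option (Fin m), atilde a o 0 = 1 := fun o => by simp [atilde]
  have at_none_succ : ∀ j : Fin n, atilde a none j.succ = 0 := fun j => by simp [atilde]
  have at_some_succ : ∀ (i : Fin m) (j : Fin n), atilde a (some i) j.succ = a i j :=
    fun i j => by simp [atilde]
  -- get a ball around x inside the cone
  obtain ⟨ε, hε, hball⟩ := Metric.mem_nhds_iff.mp (mem_interior_iff_mem_nhds.mp hx)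
  set δ : ℝ := ε / 2 with hδdef
  have hδ : 0 < δ := by positivity
  set z : Fin (n+1) → ℝ := fun k => ((x k : ℝ)) - δ * rAt a none k with hzdef
  have hzball : z ∈ Metric.ball (fun k => ((x k : ℝ))) ε := by
    rw [Metric.mem_ball, dist_pi_lt_iff hε]
    intro k
    rw [Real.dist_eq, hzdef]
    have hle : |rAt a none k| ≤ 1 := by
      refine Fin.cases ?_ ?_ k
      · rw [rAt_zero]; norm_num
      · intro j; rw [rAt_none_succ]; norm_num
    have : |(((x k : ℝ)) - δ * rAt a none k) - ((x k : ℝ))| = δ * |rAt a none k| := by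
      rw [show (((x k : ℝ)) - δ * rAt a none k) - ((x k : ℝ)) = -(δ * rAt a none k) by ring,
        abs_neg, abs_mul, abs_of_pos hδ]
    rw [this]
    nlinarith
  obtain ⟨c, hc0, hcrep⟩ := hball hzball
  -- coordinate equations
  have h0 : ((x 0 : ℝ)) - δ = ∑ o : Option (Fin m), c o := by
    have h := congrFun hcrep 0
    rw [Finset.sum_apply] at h
    simp only [Pi.smul_apply, smul_eq_mul, at_zero, Int.cast_one, mul_one] at h
    rw [hzdef] at h
    simpa [rAt_zero] using h
  have hsucc : ∀ j : Fin n, ((x j.succ : ℝ)) = ∑ i : Fin m, c (some i) * ((a i j : ℝ)) := by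
    intro j
    have h := congrFun hcrep j.succ
    rw [Finset.sum_apply] at h
    simp only [Pi.smul_apply, smul_eq_mul, Fintype.sum_option, Option.elim_none,
      Option.elim_some] at h
    rw [hzdef] at h
    simp only [rAt_none_succ, mul_zero, sub_zero, at_none_succ, at_some_succ,
      Int.cast_zero, zero_add] at h
    exact h
  set s : ℝ := ∑ i : Fin m, c (some i) with hsdef
  have hs0 : 0 ≤ s := Finset.sum_nonneg fun i _ => hc0 (some i)
  have hsle : s ≤ ((x 0 : ℝ)) - δ := by
    rw [h0, Fintype.sum_option]
    have := hc0 none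
    linarith
  have hx0pos : 0 < x 0 := by
    have : (0 : ℝ) < ((x 0 : ℝ)) := by linarith
    exact_mod_cast this
  rcases eq_or_lt_of_le hs0 with hs | hs
  · -- s = 0 : x = (x 0, 0)
    have hcz : ∀ i : Fin m, c (some i) = 0 := by
      intro i
      have := Finset.sum_eq_zero_iff_of_nonneg (fun i (_ : i ∈ Finset.univ) => hc0 (some i))
      exact this.mp hs.symm i (Finset.mem_univ i)
    have hxsucc : ∀ j : Fin n, x j.succ = 0 := by
      intro j
      have := hsucc j
      simp only [hcz, zero_mul, Finset.sum_const_zero] at this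
      exact_mod_cast this
    refine ⟨fun o => Option.elim o (x 0 - 1).toNat (fun _ => 0), ?_⟩
    funext k
    rw [Pi.add_apply, Finset.sum_apply]
    refine Fin.cases ?_ ?_ k
    · simp only [Pi.smul_apply, smul_eq_mul, at_zero, mul_one, Fintype.sum_option,
        Option.elim_none, Option.elim_some]
      rw [Int.toNat_of_nonneg (by omega)]
      simp
    · intro j
      simp only [Pi.smul_apply, smul_eq_mul, Fintype.sum_option, Option.elim_none,
        Option.elim_some, at_none_succ, at_some_succ, mul_zero, zero_add, hxsucc j]
      simp
  · -- s > 0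
    set txr : Fin n → ℝ := fun j => ((x j.succ : ℝ)) with htxrdef
    have htxr : txr = ∑ i : Fin m, c (some i) • (fun k => ((a i k : ℝ))) := by
      funext j
      rw [Finset.sum_apply, htxrdef]
      simpa using hsucc j
    have hall : ∀ i : Fin m, (fun k => ((a i k : ℝ))) ∈ (⋃ σ ∈ 𝒮,
        convexHull ℝ (insert (0 : Fin n → ℝ) ((fun i => fun k => ((a i k : ℝ))) '' ↑σ))) := by
      intro i
      obtain ⟨σ, hσ, hiσ⟩ := hray i
      exact Set.mem_biUnion hσ (subset_convexHull _ _
        (Set.mem_insert_of_mem _ ⟨i, hiσ, rfl⟩))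
    set p : Fin n → ℝ := ∑ i : Fin m, (s⁻¹ * c (some i)) • (fun k => ((a i k : ℝ))) with hpdef
    have hpU : p ∈ (⋃ σ ∈ 𝒮,
        convexHull ℝ (insert (0 : Fin n → ℝ) ((fun i => fun k => ((a i k : ℝ))) '' ↑σ))) := by
      refine Convex.sum_mem hconv (fun i _ => ?_) ?_ (fun i _ => hall i)
      · have := hc0 (some i)
        positivity
      · rw [← Finset.mul_sum, ← hsdef, inv_mul_cancel₀ hs.ne']
    obtain ⟨σ, hσ, hpσ⟩ := Set.mem_iUnion₂.mp hpU
    obtain ⟨d, hd0, hdsupp, hdsum, hpeq⟩ := hull_subset_W a σ hpσ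
    have htx2 : txr = ∑ i : Fin m, (s * d i) • (fun k => ((a i k : ℝ))) := by
      have h1 : s • p = txr := by
        rw [hpdef, Finset.smul_sum, htxr]
        refine Finset.sum_congr rfl fun i _ => ?_
        rw [smul_smul, ← mul_assoc, mul_inv_cancel₀ hs.ne', one_mul]
      rw [← h1, hpeq, Finset.smul_sum]
      refine Finset.sum_congr rfl fun i _ => ?_
      rw [smul_smul]
    obtain ⟨hli, hsp⟩ := hsmooth σ hσ
    have hspan : ⊤ ≤ Submodule.span ℤ (Set.range (fun i : {i // i ∈ σ} => a i.1)) := by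
      have hr : Set.range (fun i : {i // i ∈ σ} => a i.1) = a '' ↑σ := by
        ext v
        constructor
        · rintro ⟨i, rfl⟩
          exact ⟨i.1, i.2, rfl⟩
        · rintro ⟨i, hi, rfl⟩
          exact ⟨⟨i, hi⟩, rfl⟩
      rw [hr, hsp]
    set B : Module.Basis {i // i ∈ σ} ℤ (Fin n → ℤ) := Module.Basis.mk hli hspan with hBdef
    have hBapply : ∀ i : {i // i ∈ σ}, B i = a i.1 := fun i => by
      rw [hBdef, Module.Basis.mk_apply]
    set tx : Fin n → ℤ := fun j => x j.succ with htxdef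
    set M : {i // i ∈ σ} → ℤ := fun i => B.repr tx i with hMdef
    have htx : ∑ i0 : {i // i ∈ σ}, M i0 • a i0.1 = tx := by
      rw [hMdef]
      conv_rhs => rw [← B.sum_repr tx]
      exact Finset.sum_congr rfl fun i0 _ => by rw [hBapply i0]
    -- dual functionals give M i0 = s * d i0
    have hM : ∀ i0 : {i // i ∈ σ}, ((M i0 : ℝ)) = s * d i0.1 := by
      intro i0
      set w : Fin n → ℤ := fun k => B.repr (Pi.single k 1) i0 with hwdef
      have hrepr_lin : ∀ v : Fin n → ℤ, B.repr v i0 = ∑ k : Fin n, v k * w k := by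
        intro v
        have hv : v = ∑ k : Fin n, v k • Pi.single k (1:ℤ) := by
          funext j
          rw [Finset.sum_apply]
          simp [Pi.single_apply]
        conv_lhs => rw [hv]
        rw [map_sum, Finsupp.finset_sum_apply]
        refine Finset.sum_congr rfl fun k _ => ?_
        rw [map_smul, Finsupp.smul_apply, smul_eq_mul, hwdef]
      have hw_basis : ∀ i1 : {i // i ∈ σ},
          (∑ k : Fin n, a i1.1 k * w k) = if i1 = i0 then 1 else 0 := by
        intro i1
        rw [← hrepr_lin (a i1.1), ← hBapply i1, Module.Basis.repr_self]
        exact Finsupp.single_apply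
      have hLHS : ∑ k : Fin n, txr k * ((w k : ℝ)) = ((M i0 : ℝ)) := by
        rw [hMdef]
        have h1 : ((∑ k : Fin n, tx k * w k : ℤ) : ℝ) = ∑ k : Fin n, txr k * ((w k : ℝ)) := by
          push_cast
          rfl
        rw [← h1, ← hrepr_lin tx]
      have hRHS : ∑ k : Fin n, txr k * ((w k : ℝ)) = s * d i0.1 := by
        calc ∑ k : Fin n, txr k * ((w k : ℝ))
            = ∑ k : Fin n, (∑ i : Fin m, (s * d i) * ((a i k : ℝ))) * ((w k : ℝ)) := by
              refine Finset.sum_congr rfl fun k _ => ?_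
              congr 1
              have := congrFun htx2 k
              rw [Finset.sum_apply] at this
              simpa using this
          _ = ∑ k : Fin n, ∑ i : Fin m, (s * d i) * ((a i k : ℝ)) * ((w k : ℝ)) := by
              refine Finset.sum_congr rfl fun k _ => Finset.sum_mul _ _ _
          _ = ∑ i : Fin m, ∑ k : Fin n, (s * d i) * ((a i k : ℝ)) * ((w k : ℝ)) :=
              Finset.sum_comm
          _ = ∑ i : Fin m, (s * d i) * (∑ k : Fin n, ((a i k : ℝ)) * ((w k : ℝ))) := by
              refine Finset.sum_congr rfl fun i _ => ?_
              rw [Finset.mul_sum]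
              refine Finset.sum_congr rfl fun k _ => by ring
          _ = ∑ i : Fin m, (if i = i0.1 then s * d i else 0) := by
              refine Finset.sum_congr rfl fun i _ => ?_
              by_cases hiσ : i ∈ σ
              · have h2 : ∑ k : Fin n, ((a i k : ℝ)) * ((w k : ℝ))
                    = (((if (⟨i, hiσ⟩ : {i // i ∈ σ}) = i0 then (1:ℤ) else 0) : ℤ) : ℝ) := by
                  rw [← hw_basis ⟨i, hiσ⟩]
                  push_cast
                  rfl
                rw [h2]
                by_cases he : (⟨i, hiσ⟩ : {i // i ∈ σ}) = i0
                · rw [if_pos he, if_pos]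
                  · norm_num
                  · rw [← he]
                · rw [if_neg he, if_neg]
                  · norm_num
                  · intro hh
                    exact he (Subtype.ext hh)
              · rw [hdsupp i hiσ, mul_zero, zero_mul, if_neg]
                intro hh
                rw [hh] at hiσ
                exact hiσ i0.2
          _ = s * d i0.1 := by
              rw [Finset.sum_ite_eq' Finset.univ i0.1 (fun i => s * d i)]
              simp
      rw [← hLHS, hRHS]
    have hM0 : ∀ i0 : {i // i ∈ σ}, 0 ≤ M i0 := by
      intro i0
      have : (0:ℝ) ≤ ((M i0 : ℝ)) := by
        rw [hM i0]
        exact mul_nonneg hs0 (hd0 _)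
      exact_mod_cast this
    have hMsum_lt : ((∑ i0 : {i // i ∈ σ}, M i0 : ℤ) : ℝ) < ((x 0 : ℝ)) := by
      have h1 : ((∑ i0 : {i // i ∈ σ}, M i0 : ℤ) : ℝ) = s * ∑ i ∈ σ, d i := by
        push_cast
        rw [Finset.sum_congr rfl fun i0 (_ : i0 ∈ Finset.univ) => hM i0, ← Finset.mul_sum]
        congr 1
        exact Finset.sum_coe_sort σ d
      have h2 : ∑ i ∈ σ, d i ≤ 1 := by
        rw [show ∑ i ∈ σ, d i = ∑ i : Fin m, d i from
          Finset.sum_subset (Finset.subset_univ σ) (fun i _ hi => hdsupp i hi)]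
        exact hdsum
      rw [h1]
      nlinarith
    have hMsum_le : (∑ i0 : {i // i ∈ σ}, M i0) ≤ x 0 - 1 := by
      have h3 : (∑ i0 : {i // i ∈ σ}, M i0) < x 0 := by exact_mod_cast hMsum_lt
      omega
    refine ⟨fun o => Option.elim o (x 0 - 1 - ∑ i0 : {i // i ∈ σ}, M i0).toNat
      (fun i => if h : i ∈ σ then (M ⟨i, h⟩).toNat else 0), ?_⟩
    have hcast_dite : ∀ i : Fin m,
        (((if h : i ∈ σ then (M ⟨i, h⟩).toNat else 0 : ℕ)) : ℤ)
          = (if h : i ∈ σ then M ⟨i, h⟩ else 0) := by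
      intro i
      by_cases h : i ∈ σ
      · rw [dif_pos h, dif_pos h, Int.toNat_of_nonneg (hM0 ⟨i, h⟩)]
      · rw [dif_neg h, dif_neg h]; rfl
    funext k
    rw [Pi.add_apply, Finset.sum_apply]
    refine Fin.cases ?_ ?_ k
    · simp only [Pi.smul_apply, smul_eq_mul, at_zero, mul_one, Fintype.sum_option,
        Option.elim_none, Option.elim_some]
      rw [Finset.sum_congr rfl fun i _ => hcast_dite i, ← sum_subtype_dite σ M,
        Int.toNat_of_nonneg (by omega)]
      omega
    · intro j
      simp only [Pi.smul_apply, smul_eq_mul, Fintype.sum_option, Option.elim_none,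
        Option.elim_some, at_none_succ, at_some_succ, mul_zero, zero_add]
      have h1 : ∑ i : Fin m,
          (((if h : i ∈ σ then (M ⟨i, h⟩).toNat else 0 : ℕ)) : ℤ) * a i j
          = ∑ i0 : {i // i ∈ σ}, M i0 * a i0.1 j := by
        rw [sum_subtype_dite σ (fun i0 => M i0 * a i0.1 j)]
        refine Finset.sum_congr rfl fun i _ => ?_
        rw [hcast_dite i]
        by_cases h : i ∈ σ
        · rw [dif_pos h, dif_pos h]
        · rw [dif_neg h, dif_neg h, zero_mul]
      rw [h1]
      have h2 := congrFun htx j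
      rw [Finset.sum_apply] at h2
      simp only [Pi.smul_apply, smul_eq_mul] at h2
      rw [h2]

lemma rep_mem_interior {𝒮 : Finset (Finset (Fin m))}
    (hcomplete : ∀ x : Fin n → ℝ, ∃ σ ∈ 𝒮, ∃ c : Fin m → ℝ,
      (∀ i, 0 ≤ c i) ∧ (∀ i, i ∉ σ → c i = 0) ∧
        x = ∑ i, c i • (fun k => ((a i k : ℝ))))
    {x : Fin (n + 1) → ℤ}
    (h : ∃ c : Option (Fin m) → ℕ, x = atilde a none + ∑ o, ((c o : ℤ)) • atilde a o) :
    (fun k => ((x k : ℝ))) ∈ interior (Cset a) := by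
  obtain ⟨c, rfl⟩ := h
  have h1 : (fun k => (((atilde a none + ∑ o, ((c o : ℤ)) • atilde a o) k : ℝ)))
      = rAt a none + ∑ o : Option (Fin m), ((c o : ℝ)) • (fun k => ((atilde a o k : ℝ))) := by
    funext k
    simp only [Pi.add_apply, Finset.sum_apply, Pi.smul_apply, smul_eq_mul]
    push_cast
    rfl
  rw [h1]
  apply interior_add_mem a
  · exact e_mem_interior a hcomplete
  · exact ⟨fun o => ((c o : ℝ)), fun o => by positivity, rfl⟩

lemma rep_shift {x : Fin (n + 1) → ℤ} {c : Option (Fin m) → ℕ}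
    (hx : x = atilde a none + ∑ o, ((c o : ℤ)) • atilde a o) :
    ∃ c' : Option (Fin m) → ℕ, x = ∑ o, ((c' o : ℤ)) • atilde a o := by
  refine ⟨fun o => Option.elim o (c none + 1) (fun i => c (some i)), ?_⟩
  rw [hx, Fintype.sum_option, Fintype.sum_option]
  simp only [Option.elim_none, Option.elim_some]
  push_cast
  rw [add_smul, one_smul]
  abel

lemma rep_add {x y : Fin (n + 1) → ℤ} {cx cy : Option (Fin m) → ℕ}
    (hx : x = ∑ o, ((cx o : ℤ)) • atilde a o)
    (hy : y = atilde a none + ∑ o, ((cy o : ℤ)) • atilde a o) :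
    x + y = atilde a none + ∑ o, (((cx o + cy o : ℕ) : ℤ)) • atilde a o := by
  rw [hx, hy]
  have : ∑ o : Option (Fin m), (((cx o + cy o : ℕ) : ℤ)) • atilde a o
      = (∑ o : Option (Fin m), ((cx o : ℤ)) • atilde a o)
        + ∑ o : Option (Fin m), ((cy o : ℤ)) • atilde a o := by
    rw [← Finset.sum_add_distrib]
    refine Finset.sum_congr rfl fun o _ => ?_
    push_cast
    rw [add_smul]
  rw [this]
  abel

end Stmt18aux


open Stmt18aux

/-- For a complete smooth weak Fano fan, the canonical module of the (normal
Cohen–Macaulay) toric ring `S = ℂ[ℕ·Ã]` satisfies `ω_S ≅ S((1,0))`: inside the Laurent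
algebra `ℂ[ℤ^{n+1}]`, the span `ω` of the monomials with exponent an interior point of
the cone `C(Ã)` is an ideal of the semigroup algebra `S` (the span of the monomials with
exponent in the semigroup `ℕ·Ã`), and `ω` equals the principal shift of `S` by the
monomial with exponent `(1,0)` — i.e. the interior points are exactly `(1,0) + ℕ·Ã`. -/
theorem stmt18 (n m : ℕ) (a : Fin m → Fin n → ℤ)
    (𝒮 : Finset (Finset (Fin m)))
    (hcard : ∀ σ ∈ 𝒮, σ.card = n)
    (hray : ∀ i : Fin m, ∃ σ ∈ 𝒮, i ∈ σ)
    (hcomplete : ∀ x : Fin n → ℝ, ∃ σ ∈ 𝒮, ∃ c : Fin m → ℝ,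
      (∀ i, 0 ≤ c i) ∧ (∀ i, i ∉ σ → c i = 0) ∧
        x = ∑ i, c i • (fun k => ((a i k : ℝ))))
    (hsmooth : ∀ σ ∈ 𝒮,
      LinearIndependent ℤ (fun i : {i // i ∈ σ} => a i.1) ∧
        Submodule.span ℤ (a '' ↑σ) = ⊤)
    (hconv : Convex ℝ (⋃ σ ∈ 𝒮,
      convexHull ℝ (insert (0 : Fin n → ℝ) ((fun i => fun k => ((a i k : ℝ))) '' ↑σ))))
    (Sring ω : Submodule ℂ (AddMonoidAlgebra ℂ (Fin (n + 1) → ℤ)))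
    (hSring : Sring = Submodule.span ℂ
      {p | ∃ c : Option (Fin m) → ℕ,
        p = AddMonoidAlgebra.single (∑ o, (c o : ℤ) • atilde a o) (1 : ℂ)})
    (hω : ω = Submodule.span ℂ
      {p | ∃ x : Fin (n + 1) → ℤ,
        ((fun k => ((x k : ℝ))) ∈ interior
          {y : Fin (n + 1) → ℝ | ∃ c : Option (Fin m) → ℝ, (∀ o, 0 ≤ c o) ∧
            y = ∑ o, c o • (fun k => ((atilde a o k : ℝ)))}) ∧
        p = AddMonoidAlgebra.single x (1 : ℂ)}) :
    ω ≤ Sring ∧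
    (∀ p ∈ Sring, ∀ q ∈ ω, p * q ∈ ω) ∧
    (ω : Set (AddMonoidAlgebra ℂ (Fin (n + 1) → ℤ)))
      = (fun s => AddMonoidAlgebra.single (Fin.cons 1 0 : Fin (n + 1) → ℤ) (1 : ℂ) * s) ''
          (Sring : Set (AddMonoidAlgebra ℂ (Fin (n + 1) → ℤ))) := by
  have hCeq : {y : Fin (n + 1) → ℝ | ∃ c : Option (Fin m) → ℝ, (∀ o, 0 ≤ c o) ∧
      y = ∑ o, c o • (fun k => ((atilde a o k : ℝ)))} = Cset a := rfl
  have hkey : ∀ x : Fin (n + 1) → ℤ,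
      ((fun k => ((x k : ℝ))) ∈ interior (Cset a)) ↔
        ∃ c : Option (Fin m) → ℕ, x = atilde a none + ∑ o, ((c o : ℤ)) • atilde a o :=
    fun x => ⟨fun h => interior_mem_rep a hray hsmooth hconv h,
      fun h => rep_mem_interior a hcomplete h⟩
  have he : (Fin.cons 1 0 : Fin (n + 1) → ℤ) = atilde a none := rfl
  subst hSring hω
  rw [hCeq]
  refine ⟨?_, ?_, ?_⟩
  · -- ω ≤ Sring
    apply Submodule.span_le.mpr
    rintro p ⟨x, hxI, rfl⟩
    obtain ⟨c, hc⟩ := (hkey x).mp hxI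
    obtain ⟨c', hc'⟩ := rep_shift a hc
    exact Submodule.subset_span ⟨c', by rw [hc']⟩
  · -- ideal property
    intro p hp q hq
    have hmul : Submodule.span ℂ
        {p | ∃ c : Option (Fin m) → ℕ,
          p = AddMonoidAlgebra.single (∑ o, (c o : ℤ) • atilde a o) (1 : ℂ)} *
        Submodule.span ℂ
        {p | ∃ x : Fin (n + 1) → ℤ,
          ((fun k => ((x k : ℝ))) ∈ interior (Cset a)) ∧
          p = AddMonoidAlgebra.single x (1 : ℂ)} ≤
        Submodule.span ℂ
        {p | ∃ x : Fin (n + 1) → ℤ,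
          ((fun k => ((x k : ℝ))) ∈ interior (Cset a)) ∧
          p = AddMonoidAlgebra.single x (1 : ℂ)} := by
      rw [Submodule.span_mul_span]
      apply Submodule.span_le.mpr
      rintro r hr
      obtain ⟨u, ⟨cu, rfl⟩, v, ⟨xv, hxv, rfl⟩, rfl⟩ := hr
      apply Submodule.subset_span
      refine ⟨(∑ o, (cu o : ℤ) • atilde a o) + xv, ?_, ?_⟩
      · obtain ⟨cv, hcv⟩ := (hkey xv).mp hxv
        exact (hkey _).mpr ⟨fun o => cu o + cv o, rep_add a rfl hcv⟩
      · show _ * _ = _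
        rw [AddMonoidAlgebra.single_mul_single, one_mul]
    exact hmul (Submodule.mul_mem_mul hp hq)
  · -- shift equality
    have hmap : Submodule.span ℂ
        {p | ∃ x : Fin (n + 1) → ℤ,
          ((fun k => ((x k : ℝ))) ∈ interior (Cset a)) ∧
          p = AddMonoidAlgebra.single x (1 : ℂ)}
        = Submodule.map
            (LinearMap.mulLeft ℂ
              (AddMonoidAlgebra.single (Fin.cons 1 0 : Fin (n + 1) → ℤ) (1 : ℂ)))
            (Submodule.span ℂ
              {p | ∃ c : Option (Fin m) → ℕ,
                p = AddMonoidAlgebra.single (∑ o, (c o : ℤ) • atilde a o) (1 : ℂ)}) := by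
      rw [Submodule.map_span]
      congr 1
      ext r
      constructor
      · rintro ⟨x, hxI, rfl⟩
        obtain ⟨c, hc⟩ := (hkey x).mp hxI
        refine ⟨AddMonoidAlgebra.single (∑ o, (c o : ℤ) • atilde a o) (1 : ℂ), ⟨c, rfl⟩, ?_⟩
        rw [LinearMap.mulLeft_apply, AddMonoidAlgebra.single_mul_single, one_mul, he, ← hc]
      · rintro ⟨u, ⟨c, rfl⟩, rfl⟩
        refine ⟨(Fin.cons 1 0 : Fin (n + 1) → ℤ) + ∑ o, (c o : ℤ) • atilde a o, ?_, ?_⟩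
        · exact (hkey _).mpr ⟨c, by rw [he]⟩
        · rw [LinearMap.mulLeft_apply, AddMonoidAlgebra.single_mul_single, one_mul]
    rw [hmap, Submodule.map_coe]
    rfl
end
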